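/- arXiv:2001.01663 — 16 statements merged into one kernel-verified Lean document; each statement's English description precedes it below -/
import Mathlib

section
/- A free filter F on ℕ is a weak P⁺-filter if and only if for every function Γ : ℕ → ℕ, either Γ is bounded on some F-stationary set, or every F-stationary set I has an F-stationary subset on which Γ is finite-to-one. -/
/-- A set is `F`-stationary if its complement is not in `F`. -/
def FStat (F : Filter ℕ) (A : Set ℕ) : Prop := Aᶜ ∉ F

/-- `F` is a weak P⁺-filter. -/
def WeakPPlus (F : Filter ℕ) : Prop :=
  ∀ A : ℕ → Set ℕ, (∀ k, A k ∈ F) → Antitone A →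
    ∀ I : Set ℕ, FStat F I →
      ∃ B ⊆ I, FStat F B ∧ ∀ k, (B \ A k).Finite

theorem stmt_0 (F : Filter ℕ) (hfree : F ≤ Filter.cofinite) [F.NeBot] :
    WeakPPlus F ↔
      ∀ Γ : ℕ → ℕ,
        (∃ S : Set ℕ, FStat F S ∧ ∃ C, ∀ n ∈ S, Γ n ≤ C) ∨
        (∀ I : Set ℕ, FStat F I →
          ∃ B ⊆ I, FStat F B ∧ ∀ m, {n ∈ B | Γ n = m}.Finite) := by
  constructor
  · intro hW Γ
    by_cases h : ∃ k, {n | k < Γ n} ∉ F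
    · obtain ⟨k, hk⟩ := h
      left
      refine ⟨{n | Γ n ≤ k}, ?_, k, fun n hn => hn⟩
      have : {n | Γ n ≤ k}ᶜ = {n | k < Γ n} := by
        ext n; simp [not_le]
      rw [FStat, this]; exact hk
    · push_neg at h
      right
      intro I hI
      obtain ⟨B, hBI, hBst, hfin⟩ := hW (fun k => {n | k < Γ n}) h
        (fun k l hkl n hn => lt_of_le_of_lt hkl hn) I hI
      refine ⟨B, hBI, hBst, fun m => ?_⟩
      refine (hfin m).subset fun n hn => ?_
      exact ⟨hn.1, by simp [hn.2]⟩
  · intro h A hA hmono I hI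
    classical
    set Γ : ℕ → ℕ := fun n => if h : ∃ k, n ∉ A k then Nat.find h else n with hΓ
    rcases h Γ with ⟨S, hS, C, hC⟩ | h2
    · exfalso
      have hsub : S ∩ A C ⊆ Set.Iic C := by
        intro n ⟨hnS, hnA⟩
        by_cases hex : ∃ k, n ∉ A k
        · have hfind : n ∉ A (Nat.find hex) := Nat.find_spec hex
          have hCle : Γ n ≤ C := hC n hnS
          have : Nat.find hex ≤ C := by simpa [hΓ, hex] using hCle
          exact absurd (hmono this hnA) hfind
        · have : Γ n = n := by simp [hΓ, hex]
          have := hC n hnS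
          simpa [hΓ, hex] using this
      have hfin : (S ∩ A C).Finite := (Set.finite_Iic C).subset hsub
      have hco : (S ∩ A C)ᶜ ∈ F := hfree hfin.compl_mem_cofinite
      have : Sᶜ ∈ F := by
        filter_upwards [hco, hA C] with n hn hnA
        intro hnS
        exact hn ⟨hnS, hnA⟩
      exact hS this
    · obtain ⟨B, hBI, hBst, hfin⟩ := h2 I hI
      refine ⟨B, hBI, hBst, fun k => ?_⟩
      have : B \ A k ⊆ ⋃ m ∈ Set.Iic k, {n ∈ B | Γ n = m} := by
        intro n ⟨hnB, hnA⟩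
        have hex : ∃ j, n ∉ A j := ⟨k, hnA⟩
        have hle : Nat.find hex ≤ k := Nat.find_le hnA
        have hΓn : Γ n = Nat.find hex := by simp [hΓ, hex]
        exact Set.mem_biUnion hle ⟨hnB, hΓn⟩
      exact (Set.Finite.biUnion (Set.finite_Iic k) fun m _ => hfin m).subset this
end

section
/- A free filter F on ℕ is a P⁺-filter if and only if for every function Γ : ℕ → ℕ, either Γ is bounded on some element of F, or Γ is finite-to-one on some F-stationary set. -/
/-- `F` is a P⁺-filter. -/
def PPlus (F : Filter ℕ) : Prop :=
  ∀ A : ℕ → Set ℕ, (∀ k, FStat F (A k)) → Antitone A →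
    ∃ B : Set ℕ, FStat F B ∧ ∀ k, (B \ A k).Finite

theorem stmt_1 (F : Filter ℕ) (hfree : F ≤ Filter.cofinite) [F.NeBot] :
    PPlus F ↔
      ∀ Γ : ℕ → ℕ,
        (∃ S ∈ F, ∃ C, ∀ n ∈ S, Γ n ≤ C) ∨
        (∃ B : Set ℕ, FStat F B ∧ ∀ m, {n ∈ B | Γ n = m}.Finite) := by
  constructor
  · intro hP Γ
    by_cases hb : ∃ S ∈ F, ∃ C, ∀ n ∈ S, Γ n ≤ C
    · exact Or.inl hb
    right
    set A : ℕ → Set ℕ := fun k => {n | k ≤ Γ n} with hAdef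
    have hstat : ∀ k, FStat F (A k) := by
      intro k hk
      exact hb ⟨(A k)ᶜ, hk, k, fun n hn => by
        simp only [hAdef, Set.mem_compl_iff, Set.mem_setOf_eq] at hn; omega⟩
    have hanti : Antitone A := fun i j hij n hn => le_trans hij hn
    obtain ⟨B, hB, hfin⟩ := hP A hstat hanti
    refine ⟨B, hB, fun m => (hfin (m + 1)).subset ?_⟩
    rintro n ⟨hnB, hΓ⟩
    refine ⟨hnB, ?_⟩
    simp only [hAdef, Set.mem_setOf_eq]
    omega
  · intro hD A hstat hanti
    classical
    set Γ : ℕ → ℕ := fun n => if h : ∃ k, n ∉ A k then Nat.find h else n with hΓ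
    rcases hD Γ with ⟨S, hS, C, hC⟩ | ⟨B, hB, hfin⟩
    · exfalso
      apply hstat C
      have hcof : {n : ℕ | C < n} ∈ F := by
        apply hfree
        rw [Filter.mem_cofinite]
        have : {n : ℕ | C < n}ᶜ ⊆ Set.Iic C := by
          intro n hn
          simp only [Set.mem_compl_iff, Set.mem_setOf_eq, not_lt] at hn
          exact hn
        exact (Set.finite_Iic C).subset this
      have hsub : S ∩ {n : ℕ | C < n} ⊆ (A C)ᶜ := by
        rintro n ⟨hnS, hn⟩ hnA
        simp only [Set.mem_setOf_eq] at hn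
        by_cases h : ∃ k, n ∉ A k
        · have h1 : Γ n = Nat.find h := dif_pos h
          have h2 : n ∉ A (Nat.find h) := Nat.find_spec h
          have h3 : Nat.find h ≤ C := h1 ▸ hC n hnS
          exact h2 (hanti h3 hnA)
        · have h1 : Γ n = n := dif_neg h
          have h2 := hC n hnS
          omega
      exact F.mem_of_superset (F.inter_mem hS hcof) hsub
    · refine ⟨B, hB, fun k => ?_⟩
      have hsub : B \ A k ⊆ ⋃ m ∈ Finset.range (k + 1), {n ∈ B | Γ n = m} := by
        rintro n ⟨hnB, hnA⟩
        have h : ∃ j, n ∉ A j := ⟨k, hnA⟩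
        have h1 : Γ n = Nat.find h := dif_pos h
        have h2 : Nat.find h ≤ k := Nat.find_le hnA
        simp only [Set.mem_iUnion, Finset.mem_range]
        exact ⟨Γ n, by omega, hnB, rfl⟩
      exact ((Finset.range (k + 1)).finite_toSet.biUnion fun m _ => hfin m).subset hsub
end

section
/- A free filter F on ℕ is rapid⁺ if and only if no F-stationary set I ⊆ ℕ admits an increasing interval-partition (I_n) with respect to which F is slow. -/
/-- `F` is rapid⁺: every stationary set `I` contains, for every strictly increasing
`f`, a stationary subset whose enumerating function dominates `f`. -/
def RapidPlus (F : Filter ℕ) : Prop :=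
  ∀ I : Set ℕ, FStat F I → ∀ f : ℕ → ℕ, StrictMono f →
    ∃ B ⊆ I, FStat F B ∧ ∀ n, f n ≤ Nat.nth (· ∈ B) n

/-- `(J n)` is an increasing interval-partition of `I`. -/
def IncIntervalPartition (I : Set ℕ) (J : ℕ → Set ℕ) : Prop :=
  (∀ n, (J n).Nonempty) ∧
  (∀ n, ∃ a b : ℕ, J n = I ∩ Set.Ico a b) ∧
  (⋃ n, J n) = I ∧
  (∀ n m, n < m → ∀ x ∈ J n, ∀ y ∈ J m, x < y)

/-- `F` is slow with respect to the increasing interval-partition `(J n)` of `I`. -/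
def SlowWrt (F : Filter ℕ) (I : Set ℕ) (J : ℕ → Set ℕ) : Prop :=
  ∀ A ⊆ I, FStat F A → ∃ n, n < (A ∩ J n).ncard

/-- A stationary set for a filter below the cofinite filter is infinite. -/
lemma FStat.infinite {F : Filter ℕ} (hfree : F ≤ Filter.cofinite) {A : Set ℕ}
    (hA : FStat F A) : A.Infinite := by
  intro hfin
  exact hA (hfree (by simpa [Filter.mem_cofinite] using hfin))

lemma count_split (p : ℕ → Prop) [DecidablePred p] {a b : ℕ} (hab : a ≤ b) :
    Nat.count p b = Nat.count p a + ((Finset.Ico a b).filter p).card := by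
  rw [Nat.count_eq_card_filter_range, Nat.count_eq_card_filter_range,
    Finset.range_eq_Ico,
    ← Finset.Ico_union_Ico_eq_Ico (Nat.zero_le a) hab, Finset.filter_union,
    Finset.card_union_of_disjoint]
  rw [Finset.range_eq_Ico]
  exact Finset.disjoint_filter_filter (p := p) (q := p) (Finset.Ico_disjoint_Ico_consecutive 0 a b)

lemma ncard_inter_Ico (A : Set ℕ) [DecidablePred (· ∈ A)] (a b : ℕ) :
    (A ∩ Set.Ico a b).ncard = ((Finset.Ico a b).filter (· ∈ A)).card := by
  have h : A ∩ Set.Ico a b = ↑((Finset.Ico a b).filter (· ∈ A)) := by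
    ext x
    simp [Set.mem_Ico, and_comm]
  rw [h, Set.ncard_coe_finset]

theorem stmt_2 (F : Filter ℕ) (hfree : F ≤ Filter.cofinite) [F.NeBot] :
    RapidPlus F ↔
      ¬ ∃ (I : Set ℕ) (J : ℕ → Set ℕ),
          FStat F I ∧ IncIntervalPartition I J ∧ SlowWrt F I J := by
  classical
  constructor
  · rintro hR ⟨I, J, hI, ⟨hne, hint, hUnion, hord⟩, hslow⟩
    have hfin : ∀ n, (J n).Finite := fun n => by
      obtain ⟨a, b, hab⟩ := hint n
      exact (Set.finite_Ico a b).subset (hab ▸ Set.inter_subset_right)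
    have hne' : ∀ n, ((hfin n).toFinset).Nonempty := fun n => by
      simpa using hne n
    set g : ℕ → ℕ := fun n => (hfin n).toFinset.max' (hne' n) with hg
    have hgmem : ∀ n, g n ∈ J n := fun n => by
      have := (hfin n).toFinset.max'_mem (hne' n)
      simpa using this
    have hgle : ∀ n, ∀ x ∈ J n, x ≤ g n := fun n x hx =>
      (hfin n).toFinset.le_max' x (by simpa using hx)
    have hmono : StrictMono (fun n => g n + 1) := strictMono_nat_of_lt_succ fun n => by
      have := hord n (n + 1) (Nat.lt_succ_self n) (g n) (hgmem n) (g (n + 1)) (hgmem (n + 1))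
      omega
    obtain ⟨B, hBI, hBstat, hBnth⟩ := hR I hI _ hmono
    have hBinf : {x | x ∈ B}.Infinite := by
      simpa using FStat.infinite hfree hBstat
    obtain ⟨n, hn⟩ := hslow B hBI hBstat
    have hsub : B ∩ J n ⊆ ↑((Finset.range n).image (Nat.nth (· ∈ B))) := by
      rintro x ⟨hxB, hxJ⟩
      have hxlt : x < Nat.nth (· ∈ B) n := by
        have h1 := hgle n x hxJ
        have h2 := hBnth n
        omega
      have hcount : Nat.count (· ∈ B) x < n := by
        by_contra h
        push_neg at h
        have h3 : Nat.nth (· ∈ B) n ≤ Nat.nth (· ∈ B) (Nat.count (· ∈ B) x) :=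
          (Nat.nth_le_nth hBinf).2 h
        rw [Nat.nth_count hxB] at h3
        omega
      simp only [Finset.coe_image, Set.mem_image, Finset.coe_range, Set.mem_Iio]
      exact ⟨_, hcount, Nat.nth_count hxB⟩
    have h4 := Set.ncard_le_ncard hsub (Finset.finite_toSet _)
    rw [Set.ncard_coe_finset] at h4
    have h5 : ((Finset.range n).image (Nat.nth (· ∈ B))).card ≤ n :=
      le_trans Finset.card_image_le (Finset.card_range n).le
    omega
  · intro hno I hI f hf
    by_contra hcon
    push_neg at hcon
    -- hcon : ∀ B ⊆ I, FStat F B → ∃ n, Nat.nth (· ∈ B) n < f n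
    have hIinf : I.Infinite := FStat.infinite hfree hI
    set T : ℕ → ℕ := fun m => ∑ k ∈ Finset.range m, k with hT
    -- construct the cut points
    let a : ℕ → ℕ := fun n =>
      Nat.rec 0 (fun m am => (hIinf.exists_gt (max am (f (T (m + 2))))).choose + 1) n
    have haspec : ∀ m, (hIinf.exists_gt (max (a m) (f (T (m + 2))))).choose ∈ I ∧
        max (a m) (f (T (m + 2))) < (hIinf.exists_gt (max (a m) (f (T (m + 2))))).choose :=
      fun m => (hIinf.exists_gt (max (a m) (f (T (m + 2))))).choose_spec
    have hastep : ∀ m, a (m + 1) = (hIinf.exists_gt (max (a m) (f (T (m + 2))))).choose + 1 :=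
      fun m => rfl
    have ha0 : a 0 = 0 := rfl
    have hamono : StrictMono a := strictMono_nat_of_lt_succ fun m => by
      have h1 := (haspec m).2
      rw [hastep m]
      omega
    have haf : ∀ m, f (T (m + 2)) < a (m + 1) := fun m => by
      have h1 := (haspec m).2
      rw [hastep m]
      omega
    set J : ℕ → Set ℕ := fun n => I ∩ Set.Ico (a n) (a (n + 1)) with hJ
    have hJmem : ∀ m, (hIinf.exists_gt (max (a m) (f (T (m + 2))))).choose ∈ J m := fun m => by
      have h1 := (haspec m).1
      have h2 := (haspec m).2
      refine ⟨h1, le_of_lt (lt_of_le_of_lt (le_max_left _ _) h2), ?_⟩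
      rw [hastep m]
      exact Nat.lt_succ_self _
    apply hno
    refine ⟨I, J, hI, ⟨?_, ?_, ?_, ?_⟩, ?_⟩
    · exact fun n => ⟨_, hJmem n⟩
    · exact fun n => ⟨a n, a (n + 1), rfl⟩
    · ext y
      simp only [Set.mem_iUnion]
      constructor
      · rintro ⟨m, hm, _⟩; exact hm
      · intro hy
        have hex : ∃ m, y < a (m + 1) := ⟨y, lt_of_lt_of_le (Nat.lt_succ_self y)
          (hamono.le_apply)⟩
        let m := Nat.find hex
        refine ⟨m, hy, ?_, Nat.find_spec hex⟩
        rcases Nat.eq_zero_or_pos m with hm0 | hm0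
        · rw [hm0, ha0]; exact Nat.zero_le y
        · have := Nat.find_min hex (Nat.sub_lt hm0 one_pos)
          push_neg at this
          have hm1 : m - 1 + 1 = m := Nat.succ_pred_eq_of_pos hm0
          rwa [hm1] at this
    · rintro n m hnm x ⟨_, _, hx2⟩ y ⟨_, hy1, _⟩
      have : a (n + 1) ≤ a m := hamono.monotone hnm
      omega
    · -- slowness
      intro A hAI hAstat
      by_contra hnot
      push_neg at hnot
      have hAinf : {x | x ∈ A}.Infinite := by
        simpa using FStat.infinite hfree hAstat
      have hcount : ∀ m, Nat.count (· ∈ A) (a m) ≤ T m := by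
        intro m
        induction m with
        | zero => simp [ha0, hT]
        | succ m ih =>
          have hsplit := count_split (· ∈ A) (hamono.monotone (Nat.le_succ m))
          have hcard : ((Finset.Ico (a m) (a (m + 1))).filter (· ∈ A)).card =
              (A ∩ J m).ncard := by
            rw [← ncard_inter_Ico A (a m) (a (m + 1))]
            congr 1
            ext x
            simp only [hJ, Set.mem_inter_iff, Set.mem_Ico]
            exact ⟨fun ⟨h1, h2⟩ => ⟨h1, hAI h1, h2⟩, fun ⟨h1, _, h2⟩ => ⟨h1, h2⟩⟩
          have hle := hnot m
          have hTsucc : T (m + 1) = T m + m := Finset.sum_range_succ id m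
          simp only [Nat.succ_eq_add_one] at hsplit
          omega
      obtain ⟨n, hnlt⟩ := hcon A hAI hAstat
      have hex : ∃ j, n < T (j + 1) := by
        refine ⟨n + 1, ?_⟩
        have : (n + 1 : ℕ) ≤ ∑ k ∈ Finset.range (n + 2), k :=
          Finset.single_le_sum (f := fun k => k) (fun i _ => Nat.zero_le i)
            (Finset.self_mem_range_succ (n + 1))
        simpa [hT] using lt_of_lt_of_le (Nat.lt_succ_self n) this
      let j := Nat.find hex
      have hj1 : n < T (j + 1) := Nat.find_spec hex
      have hj2 : T j ≤ n := by
        rcases Nat.eq_zero_or_pos j with hj0 | hj0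
        · simp [hj0, hT]
        · have := Nat.find_min hex (Nat.sub_lt hj0 one_pos)
          push_neg at this
          have hm1 : j - 1 + 1 = j := Nat.succ_pred_eq_of_pos hj0
          rwa [hm1] at this
      have hjpos : 1 ≤ j := by
        by_contra h
        push_neg at h
        interval_cases j
        · simp [hT] at hj1
      have hfj : f (T (j + 1)) < a j := by
        obtain ⟨m, hm⟩ : ∃ m, j = m + 1 := ⟨j - 1, (Nat.succ_pred_eq_of_pos hjpos).symm⟩
        rw [hm]
        exact haf m
      have hanth : a j ≤ Nat.nth (· ∈ A) n := by
        rw [← Nat.count_le_iff_le_nth hAinf]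
        exact le_trans (hcount j) hj2
      have hfn : f n < f (T (j + 1)) := hf hj1
      omega
end

section
/- The asymptotic density filter F_d, consisting of sets A ⊆ ℕ with lim_{n→∞} |{k < n : k ∈ A}|/n = 1, is a weak P⁺-filter but is not a P⁺-filter and is not a rapid⁺ filter. -/
/-- The asymptotic density filter, as a family of subsets of ℕ. -/
def densityFilter : Set (Set ℕ) :=
  {A | Filter.Tendsto (fun n => ((Set.Iio n ∩ A).ncard : ℝ) / n) Filter.atTop (nhds 1)}

/-- A set is `G`-stationary if its complement is not in `G`. -/
def GStat (G : Set (Set ℕ)) (A : Set ℕ) : Prop := Aᶜ ∉ G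

/-- `G` is a weak P⁺-filter. -/
def GWeakPPlus (G : Set (Set ℕ)) : Prop :=
  ∀ A : ℕ → Set ℕ, (∀ k, A k ∈ G) → Antitone A →
    ∀ I : Set ℕ, GStat G I → ∃ B ⊆ I, GStat G B ∧ ∀ k, (B \ A k).Finite

/-- `G` is a P⁺-filter. -/
def GPPlus (G : Set (Set ℕ)) : Prop :=
  ∀ A : ℕ → Set ℕ, (∀ k, GStat G (A k)) → Antitone A →
    ∃ B : Set ℕ, GStat G B ∧ ∀ k, (B \ A k).Finite

/-- `G` is rapid⁺. -/
def GRapidPlus (G : Set (Set ℕ)) : Prop :=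
  ∀ I : Set ℕ, GStat G I → ∀ f : ℕ → ℕ, StrictMono f →
    ∃ B ⊆ I, GStat G B ∧ ∀ n, f n ≤ Nat.nth (· ∈ B) n


open Filter Set
open scoped Classical

noncomputable def cnt (A : Set ℕ) (n : ℕ) : ℕ :=
  ((Finset.range n).filter (fun x => x ∈ A)).card

lemma cnt_def (A : Set ℕ) (n : ℕ) :
    cnt A n = ((Finset.range n).filter (fun x => x ∈ A)).card := rfl

lemma ncard_eq (A : Set ℕ) (n : ℕ) : (Set.Iio n ∩ A).ncard = cnt A n := by
  rw [cnt, ← Set.ncard_coe_finset]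
  congr 1
  ext x
  simp [Set.mem_Iio, and_comm]

lemma cnt_le (A : Set ℕ) (n : ℕ) : cnt A n ≤ n :=
  (Finset.card_filter_le _ _).trans_eq (Finset.card_range n)

lemma cnt_mono_set {A B : Set ℕ} (h : A ⊆ B) (n : ℕ) : cnt A n ≤ cnt B n :=
  Finset.card_le_card (Finset.monotone_filter_right _ (fun x _ hx => h hx))

lemma cnt_mono (A : Set ℕ) : Monotone (cnt A) := fun m n h =>
  Finset.card_le_card (Finset.filter_subset_filter _ (Finset.range_subset_range.2 h))

lemma cnt_add_compl (A : Set ℕ) (n : ℕ) : cnt A n + cnt Aᶜ n = n := by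
  rw [cnt, cnt]
  simp only [show (fun x : ℕ => x ∈ Aᶜ) = (fun x => ¬ x ∈ A) from rfl,
    Finset.filter_congr_decidable]
  rw [Finset.card_filter_add_card_filter_not, Finset.card_range]

lemma cnt_union_le (A B : Set ℕ) (n : ℕ) : cnt (A ∪ B) n ≤ cnt A n + cnt B n := by
  calc cnt (A ∪ B) n ≤ (((Finset.range n).filter (fun x => x ∈ A)) ∪
        ((Finset.range n).filter (fun x => x ∈ B))).card := by
        refine Finset.card_le_card ?_
        intro x hx
        simp only [cnt, Finset.mem_filter, Finset.mem_union, Set.mem_union] at hx ⊢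
        tauto
    _ ≤ cnt A n + cnt B n := Finset.card_union_le _ _

lemma cnt_diff_le {B I : Set ℕ} (h : B ⊆ I) (n : ℕ) : cnt I n ≤ cnt B n + cnt (I \ B) n := by
  refine le_trans (cnt_mono_set ?_ n) (cnt_union_le _ _ n)
  intro x hx
  by_cases hxB : x ∈ B
  · exact Or.inl hxB
  · exact Or.inr ⟨hx, hxB⟩

lemma cnt_le_of_finite {S : Set ℕ} (hS : S.Finite) (n : ℕ) : cnt S n ≤ hS.toFinset.card := by
  refine Finset.card_le_card ?_
  intro x hx
  simp only [Finset.mem_filter] at hx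
  simpa using hx.2

lemma mem_densityFilter (A : Set ℕ) :
    A ∈ densityFilter ↔ Tendsto (fun n => (cnt A n : ℝ) / n) atTop (nhds 1) := by
  unfold densityFilter
  simp only [Set.mem_setOf_eq, ncard_eq]

lemma compl_mem_iff (A : Set ℕ) :
    Aᶜ ∈ densityFilter ↔ Tendsto (fun n => (cnt A n : ℝ) / n) atTop (nhds 0) := by
  rw [mem_densityFilter]
  have heq : (fun n => (cnt Aᶜ n : ℝ) / n) =ᶠ[atTop] (fun n => 1 - (cnt A n : ℝ) / n) := by
    filter_upwards [eventually_ge_atTop 1] with n hn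
    have h := cnt_add_compl A n
    have hn0 : (n : ℝ) ≠ 0 := by positivity
    have : (cnt Aᶜ n : ℝ) = n - cnt A n := by
      have hr : (cnt A n : ℝ) + cnt Aᶜ n = n := by exact_mod_cast h
      linarith
    rw [this]
    field_simp
  constructor
  · intro h
    have h2 : Tendsto (fun n => 1 - (cnt A n : ℝ) / n) atTop (nhds 1) := h.congr' heq
    have := tendsto_const_nhds (x := (1:ℝ)) (f := atTop) |>.sub h2
    simpa using this
  · intro h
    have h2 : Tendsto (fun n => 1 - (cnt A n : ℝ) / n) atTop (nhds 1) := by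
      have := tendsto_const_nhds (x := (1:ℝ)) (f := atTop) |>.sub h
      simpa using this
    exact h2.congr' heq.symm

lemma stat_iff (A : Set ℕ) :
    GStat densityFilter A ↔ ¬ Tendsto (fun n => (cnt A n : ℝ) / n) atTop (nhds 0) :=
  not_congr (compl_mem_iff A)

lemma exists_freq {A : Set ℕ} (h : GStat densityFilter A) :
    ∃ ε > (0:ℝ), ∀ N : ℕ, ∃ n ≥ N, ε * n ≤ (cnt A n : ℝ) := by
  rw [stat_iff, Metric.tendsto_atTop] at h
  push_neg at h
  obtain ⟨ε, hε, hfreq⟩ := h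
  refine ⟨ε, hε, fun N => ?_⟩
  obtain ⟨n, hn, hd⟩ := hfreq N
  refine ⟨n, hn, ?_⟩
  rcases Nat.eq_zero_or_pos n with rfl | hpos
  · simp
  · have hdist : dist ((cnt A n : ℝ) / n) 0 = (cnt A n : ℝ) / n := by
      rw [Real.dist_eq, sub_zero, abs_of_nonneg (by positivity)]
    rw [hdist] at hd
    have hn0 : (0:ℝ) < n := by exact_mod_cast hpos
    rw [le_div_iff₀ hn0] at hd
    linarith

lemma cnt_dvd_lower (m n : ℕ) (hm : 0 < m) : n / m ≤ cnt {x | m ∣ x} n := by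
  rw [cnt, ← Finset.card_range (n / m)]
  apply Finset.card_le_card_of_injOn (fun j => j * m)
  · intro j hj
    simp only [Finset.mem_coe, Finset.mem_range] at hj
    simp only [Finset.mem_coe, Finset.mem_filter, Finset.mem_range, Set.mem_setOf_eq]
    constructor
    · have h1 : (j + 1) * m ≤ (n / m) * m := Nat.mul_le_mul_right m hj
      have h2 : (n / m) * m ≤ n := Nat.div_mul_le_self n m
      calc j * m < (j + 1) * m := by
            have := Nat.succ_le_succ (Nat.le.refl (n := j))
            nlinarith
        _ ≤ n := h1.trans h2
    · exact dvd_mul_left m j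
  · intro a _ b _ hab
    exact Nat.eq_of_mul_eq_mul_right hm hab

lemma cnt_dvd_upper (m n : ℕ) (hm : 0 < m) : cnt {x | m ∣ x} n ≤ n / m + 1 := by
  rw [cnt, ← Finset.card_range (n / m + 1)]
  apply Finset.card_le_card_of_injOn (fun x => x / m)
  · intro x hx
    simp only [Finset.mem_coe, Finset.mem_filter, Finset.mem_range] at hx
    simp only [Finset.mem_coe, Finset.mem_range]
    exact Nat.lt_succ_of_le (Nat.div_le_div_right hx.1.le)
  · intro a ha b hb hab
    simp only [Finset.mem_coe, Finset.mem_filter, Set.mem_setOf_eq] at ha hb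
    have := congrArg (fun t => t * m) hab
    simpa [Nat.div_mul_cancel ha.2, Nat.div_mul_cancel hb.2] using this

lemma not_PPlus : ¬ GPPlus densityFilter := by
  intro h
  set A : ℕ → Set ℕ := fun k => {x | 2 ^ k ∣ x} with hA
  have hstat : ∀ k, GStat densityFilter (A k) := by
    intro k
    rw [stat_iff]
    intro ht
    have hpos : (0:ℝ) < ((2:ℝ) ^ k)⁻¹ := by positivity
    have hev := ht.eventually (gt_mem_nhds hpos)
    rw [eventually_atTop] at hev
    obtain ⟨N, hN⟩ := hev
    set n := 2 ^ k * (N + 1) with hn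
    have hnN : n ≥ N := by
      have : N + 1 ≤ n := Nat.le_mul_of_pos_left _ (pow_pos (by norm_num) k)
      omega
    have hlt := hN n hnN
    have hcnt : N + 1 ≤ cnt (A k) n := by
      have := cnt_dvd_lower (2 ^ k) n (pow_pos (by norm_num) k)
      rwa [hn, Nat.mul_div_cancel_left _ (pow_pos (by norm_num) k)] at this
    have hnpos : (0:ℝ) < n := by
      have : 0 < n := by positivity
      exact_mod_cast this
    have hge : ((2:ℝ) ^ k)⁻¹ ≤ (cnt (A k) n : ℝ) / n := by
      rw [le_div_iff₀ hnpos]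
      have h1 : ((2:ℝ) ^ k)⁻¹ * n = (N + 1 : ℝ) := by
        rw [hn]
        push_cast
        field_simp
      rw [h1]
      exact_mod_cast hcnt
    linarith
  have hanti : Antitone A := by
    intro k l hkl x hx
    exact dvd_trans (pow_dvd_pow 2 hkl) hx
  obtain ⟨B, hBstat, hBfin⟩ := h A hstat hanti
  rw [stat_iff] at hBstat
  apply hBstat
  rw [Metric.tendsto_atTop]
  intro ε hε
  obtain ⟨k, hk⟩ := exists_pow_lt_of_lt_one (show (0:ℝ) < ε/2 by linarith)
    (show (1:ℝ)/2 < 1 by norm_num)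
  set C := (hBfin k).toFinset.card with hC
  obtain ⟨M, hM⟩ := exists_nat_gt ((C + 1 : ℝ) * 2 / ε)
  refine ⟨M + 1, fun n hn => ?_⟩
  have hnpos : 0 < n := by omega
  have hnR : (0:ℝ) < n := by exact_mod_cast hnpos
  have hcntB : cnt B n ≤ cnt (A k) n + C := by
    calc cnt B n ≤ cnt (A k ∪ (B \ A k)) n := by
          apply cnt_mono_set
          intro x hx
          by_cases hxA : x ∈ A k
          · exact Or.inl hxA
          · exact Or.inr ⟨hx, hxA⟩
      _ ≤ cnt (A k) n + cnt (B \ A k) n := cnt_union_le _ _ _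
      _ ≤ cnt (A k) n + C := by
          exact Nat.add_le_add_left (cnt_le_of_finite (hBfin k) n) _
  have hcntA : (cnt (A k) n : ℝ) ≤ (n:ℝ) / 2 ^ k + 1 := by
    have h1 := cnt_dvd_upper (2 ^ k) n (pow_pos (by norm_num) k)
    have h2 : ((n / 2 ^ k : ℕ) : ℝ) ≤ (n:ℝ) / 2 ^ k := by
      rw [div_eq_mul_inv, ← div_eq_mul_inv]
      exact_mod_cast Nat.cast_div_le
    calc (cnt (A k) n : ℝ) ≤ ((n / 2 ^ k : ℕ) : ℝ) + 1 := by exact_mod_cast h1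
      _ ≤ (n:ℝ) / 2 ^ k + 1 := by linarith
  have hratio : (cnt B n : ℝ) / n ≤ ((1:ℝ)/2) ^ k + (C + 1) / n := by
    have h3 : (cnt B n : ℝ) ≤ (n:ℝ) / 2 ^ k + 1 + C := by
      have := hcntB
      have h4 : (cnt B n : ℝ) ≤ (cnt (A k) n : ℝ) + C := by exact_mod_cast this
      linarith
    have h5 : (cnt B n : ℝ) / n ≤ ((n:ℝ) / 2 ^ k + 1 + C) / n := by gcongr
    have h6 : ((n:ℝ) / 2 ^ k + 1 + C) / n = ((1:ℝ)/2) ^ k + (C + 1) / n := by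
      rw [one_div_pow]
      field_simp
      ring
    linarith [h5, h6.le, h6.ge]
  have hCn : (C + 1 : ℝ) / n < ε / 2 := by
    rw [div_lt_iff₀ hnR]
    have hMn : ((C + 1 : ℝ) * 2 / ε) < n := by
      have : (M:ℝ) < n := by exact_mod_cast (by omega : M < n)
      linarith
    rw [div_lt_iff₀ hε] at hMn
    nlinarith
  have hnonneg : (0:ℝ) ≤ (cnt B n : ℝ) / n := by positivity
  rw [Real.dist_eq, sub_zero, abs_of_nonneg hnonneg]
  linarith

lemma cnt_eq_count (B : Set ℕ) (n : ℕ) : cnt B n = Nat.count (fun x => x ∈ B) n := by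
  rw [Nat.count_eq_card_filter_range, cnt]

lemma not_RapidPlus : ¬ GRapidPlus densityFilter := by
  intro h
  have hunivstat : GStat densityFilter Set.univ := by
    intro hmem
    rw [Set.compl_univ, mem_densityFilter] at hmem
    have h0 : (fun n => (cnt (∅ : Set ℕ) n : ℝ) / n) = fun _ => (0:ℝ) := by
      funext n
      simp [cnt]
    rw [h0] at hmem
    have := tendsto_nhds_unique hmem tendsto_const_nhds
    norm_num at this
  have hf : StrictMono (fun n => 2 ^ (n + 1)) := by
    apply strictMono_nat_of_lt_succ
    intro n
    exact Nat.pow_lt_pow_succ (by norm_num)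
  obtain ⟨B, -, hBstat, hBf⟩ := h Set.univ hunivstat _ hf
  by_cases hfin : (setOf (· ∈ B)).Finite
  · have h1 := hBf hfin.toFinset.card
    have h2 : Nat.nth (· ∈ B) hfin.toFinset.card = 0 := Nat.nth_of_card_le hfin le_rfl
    rw [h2] at h1
    have := pow_pos (show 0 < 2 by norm_num) (hfin.toFinset.card + 1)
    omega
  · have hinf : (setOf (· ∈ B)).Infinite := hfin
    rw [stat_iff] at hBstat
    apply hBstat
    have hlog : Tendsto (Nat.log 2) atTop atTop := by
      apply tendsto_atTop_atTop.2
      intro b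
      refine ⟨2 ^ b, fun m hm => ?_⟩
      have hb0 : 0 < 2 ^ b := pow_pos (by norm_num) b
      have hm0 : m ≠ 0 := by omega
      exact (Nat.le_log_iff_pow_le (by norm_num) hm0).2 hm
    have hg : Tendsto (fun L : ℕ => (L : ℝ) * ((1:ℝ)/2) ^ L) atTop (nhds 0) :=
      tendsto_self_mul_const_pow_of_lt_one (by norm_num) (by norm_num)
    have hcomp : Tendsto (fun m => ((Nat.log 2 m : ℝ)) * ((1:ℝ)/2) ^ (Nat.log 2 m))
        atTop (nhds 0) := hg.comp hlog
    apply squeeze_zero' (g := fun m => ((Nat.log 2 m : ℝ)) * ((1:ℝ)/2) ^ (Nat.log 2 m))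
    · filter_upwards with m
      positivity
    · filter_upwards [eventually_ge_atTop 1] with m hm
      set L := Nat.log 2 m with hL
      have hm0 : m ≠ 0 := by omega
      have h2L : 2 ^ L ≤ m := Nat.pow_log_le_self 2 hm0
      have hmlt : m < 2 ^ (L + 1) := Nat.lt_pow_succ_log_self (by norm_num) m
      have hmle : m ≤ Nat.nth (· ∈ B) L := le_trans (le_of_lt hmlt) (hBf L)
      have hcount : cnt B m ≤ L := by
        rw [cnt_eq_count]
        exact (Nat.count_le_iff_le_nth hinf).2 hmle
      have hmpos : (0:ℝ) < m := by exact_mod_cast Nat.pos_of_ne_zero hm0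
      have h2Lpos : (0:ℝ) < 2 ^ L := by positivity
      have h2Lm : (2:ℝ) ^ L ≤ m := by exact_mod_cast h2L
      calc (cnt B m : ℝ) / m ≤ (L : ℝ) / m := by
            gcongr
        _ ≤ (L : ℝ) / 2 ^ L := by gcongr
        _ = (L : ℝ) * ((1:ℝ)/2) ^ L := by
            rw [one_div, inv_pow, div_eq_mul_inv]
    · exact hcomp

def seqAux (N : ℕ → ℕ) : ℕ → ℕ
  | 0 => N 0
  | (k+1) => max (N (k+1)) (seqAux N k + 1)

lemma weak_PPlus : GWeakPPlus densityFilter := by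
  intro A hA hanti I hI
  obtain ⟨ε, hε, hfreq⟩ := exists_freq hI
  have hAk : ∀ k, Tendsto (fun n => (cnt (A k)ᶜ n : ℝ) / n) atTop (nhds 0) := by
    intro k
    exact (compl_mem_iff ((A k)ᶜ)).1 (by rw [compl_compl]; exact hA k)
  have hNex : ∀ k, ∃ N : ℕ, ∀ n, N ≤ n → (cnt (A k)ᶜ n : ℝ) ≤ ε * ((1:ℝ)/2) ^ (k+2) * n := by
    intro k
    have hpos : (0:ℝ) < ε * ((1:ℝ)/2) ^ (k+2) := by positivity
    have hev := (hAk k).eventually (gt_mem_nhds hpos)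
    rw [eventually_atTop] at hev
    obtain ⟨N, hN⟩ := hev
    refine ⟨N, fun n hn => ?_⟩
    rcases Nat.eq_zero_or_pos n with rfl | hp
    · simp [cnt]
    · have h1 := hN n hn
      have hnR : (0:ℝ) < n := by exact_mod_cast hp
      rw [div_lt_iff₀ hnR] at h1
      linarith
  choose N hN using hNex
  set nseq : ℕ → ℕ := seqAux N with hnseq
  have hmono : StrictMono nseq := by
    apply strictMono_nat_of_lt_succ
    intro k
    have : seqAux N (k+1) = max (N (k+1)) (seqAux N k + 1) := rfl
    rw [hnseq, this]
    exact lt_of_lt_of_le (Nat.lt_succ_self _) (le_max_right _ _)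
  have hNle : ∀ k, N k ≤ nseq k := by
    intro k
    cases k with
    | zero => exact le_refl _
    | succ k => exact le_max_left _ _
  set B : Set ℕ := {x | ∃ k, x ∈ I ∧ x ∈ A k ∧ nseq k ≤ x ∧ x < nseq (k+1)} with hB
  have hBI : B ⊆ I := by
    rintro x ⟨k, hxI, -, -, -⟩
    exact hxI
  have hBA : ∀ j, B \ A j ⊆ Set.Iio (nseq j) := by
    intro j x hx
    obtain ⟨⟨k, hxI, hxA, hk1, hk2⟩, hxnA⟩ := hx
    by_contra hge
    simp only [Set.mem_Iio, not_lt] at hge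
    have hjk : j ≤ k := by
      by_contra hlt
      push_neg at hlt
      have : nseq (k+1) ≤ nseq j := hmono.monotone hlt
      omega
    exact hxnA (hanti hjk hxA)
  -- the key counting estimate
  have hkey : ∀ n : ℕ, (cnt I n : ℝ) ≤ cnt B n + nseq 0 + (ε/2) * n := by
    intro n
    have h1 : cnt I n ≤ cnt B n + cnt (I \ B) n := cnt_diff_le hBI n
    have h1R : (cnt I n : ℝ) ≤ cnt B n + cnt (I \ B) n := by exact_mod_cast h1
    suffices h2 : (cnt (I \ B) n : ℝ) ≤ nseq 0 + (ε/2) * n by linarith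
    set S := (Finset.range n).filter (fun k => nseq k < n) with hS
    have hcov : (Finset.range n).filter (fun x => x ∈ I \ B) ⊆
        Finset.range (nseq 0) ∪ S.biUnion (fun k =>
          (Finset.range (min n (nseq (k+1)))).filter (fun x => x ∈ (A k)ᶜ)) := by
      intro x hx
      simp only [Finset.mem_filter, Finset.mem_range, Set.mem_diff] at hx
      obtain ⟨hxn, hxI, hxB⟩ := hx
      rw [Finset.mem_union]
      by_cases h0 : x < nseq 0
      · exact Or.inl (Finset.mem_range.2 h0)
      · push_neg at h0
        set k := Nat.findGreatest (fun k => nseq k ≤ x) x with hk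
        have hspec : nseq k ≤ x :=
          Nat.findGreatest_spec (P := fun k => nseq k ≤ x) (Nat.zero_le x) h0
        have hup : x < nseq (k + 1) := by
          by_contra hc
          push_neg at hc
          have hk1x : k + 1 ≤ x := le_trans (hmono.le_apply) hc
          exact Nat.findGreatest_is_greatest (Nat.lt_succ_self k) hk1x hc
        have hxA : x ∉ A k := by
          intro hmem
          exact hxB ⟨k, hxI, hmem, hspec, hup⟩
        refine Or.inr (Finset.mem_biUnion.2 ⟨k, ?_, ?_⟩)
        · rw [hS, Finset.mem_filter, Finset.mem_range]
          have hkx : k ≤ x := le_trans hmono.le_apply hspec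
          exact ⟨lt_of_le_of_lt hkx hxn, lt_of_le_of_lt hspec hxn⟩
        · rw [Finset.mem_filter, Finset.mem_range]
          exact ⟨lt_min hxn hup, hxA⟩
    have hcard := Finset.card_le_card hcov
    have hcard2 : cnt (I \ B) n ≤ nseq 0 + ∑ k ∈ S, cnt (A k)ᶜ (min n (nseq (k+1))) := by
      have h := le_trans hcard (Finset.card_union_le _ _)
      rw [Finset.card_range] at h
      have h2 := le_trans h (Nat.add_le_add_left Finset.card_biUnion_le _)
      simp only [cnt_def]
      convert h2 using 3
      · rfl
      · apply congrArg Finset.card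
        ext x
        simp
    have hcard3 : (cnt (I \ B) n : ℝ) ≤ nseq 0 + ∑ k ∈ S, (cnt (A k)ᶜ (min n (nseq (k+1))) : ℝ) := by
      have := hcard2
      push_cast
      exact_mod_cast this
    have hterm : ∀ k ∈ S, (cnt (A k)ᶜ (min n (nseq (k+1))) : ℝ) ≤ ε * ((1:ℝ)/2) ^ (k+2) * n := by
      intro k hkS
      rw [hS, Finset.mem_filter, Finset.mem_range] at hkS
      have hNk : N k ≤ min n (nseq (k+1)) := by
        refine le_min ?_ ?_
        · exact le_trans (hNle k) hkS.2.le
        · exact le_trans (hNle k) (hmono (Nat.lt_succ_self k)).le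
      have hb := hN k _ hNk
      have hminle : ((min n (nseq (k+1)) : ℕ) : ℝ) ≤ (n : ℝ) := by
        exact_mod_cast min_le_left _ _
      have hco : (0:ℝ) ≤ ε * ((1:ℝ)/2) ^ (k+2) := by positivity
      calc (cnt (A k)ᶜ (min n (nseq (k+1))) : ℝ) ≤ ε * ((1:ℝ)/2) ^ (k+2) * (min n (nseq (k+1)) : ℕ) := hb
        _ ≤ ε * ((1:ℝ)/2) ^ (k+2) * n := by
            exact mul_le_mul_of_nonneg_left hminle hco
    have hsum : ∑ k ∈ S, (cnt (A k)ᶜ (min n (nseq (k+1))) : ℝ) ≤ (ε/2) * n := by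
      calc ∑ k ∈ S, (cnt (A k)ᶜ (min n (nseq (k+1))) : ℝ)
          ≤ ∑ k ∈ S, ε * ((1:ℝ)/2) ^ (k+2) * n := Finset.sum_le_sum hterm
        _ ≤ ∑ k ∈ Finset.range n, ε * ((1:ℝ)/2) ^ (k+2) * n := by
            apply Finset.sum_le_sum_of_subset_of_nonneg (Finset.filter_subset _ _)
            intro k _ _
            positivity
        _ = (ε * n / 4) * ∑ k ∈ Finset.range n, ((1:ℝ)/2) ^ k := by
            rw [Finset.mul_sum]
            apply Finset.sum_congr rfl
            intro k _
            ring
        _ ≤ (ε * n / 4) * 2 := by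
            apply mul_le_mul_of_nonneg_left (sum_geometric_two_le n) (by positivity)
        _ = (ε/2) * n := by ring
    linarith
  refine ⟨B, hBI, ?_, fun j => Set.Finite.subset (Set.finite_Iio _) (hBA j)⟩
  rw [stat_iff]
  intro ht
  have hev := ht.eventually (gt_mem_nhds (show (0:ℝ) < ε/4 by linarith))
  rw [eventually_atTop] at hev
  obtain ⟨N₁, hN₁⟩ := hev
  obtain ⟨M, hM⟩ := exists_nat_gt ((4 * (nseq 0 : ℝ)) / ε)
  obtain ⟨n, hn, hcnt⟩ := hfreq (max N₁ (max M 1))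
  have hn1 : 1 ≤ n := le_trans (le_max_of_le_right (le_max_right _ _)) hn
  have hnN₁ : N₁ ≤ n := le_trans (le_max_left _ _) hn
  have hnM : M ≤ n := le_trans (le_max_of_le_right (le_max_left _ _)) hn
  have hnR : (0:ℝ) < n := by exact_mod_cast hn1
  have hlt := hN₁ n hnN₁
  rw [div_lt_iff₀ hnR] at hlt
  have hkeyn := hkey n
  -- ε n ≤ cnt B n + nseq0 + ε n / 2 and cnt B n < ε/4 n gives ε n / 4 < nseq0
  have h5 : ε * n / 4 < (nseq 0 : ℝ) := by linarith
  have h6 : (n : ℝ) < 4 * (nseq 0 : ℝ) / ε := by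
    rw [lt_div_iff₀ hε]
    linarith
  have h7 : (M : ℝ) ≤ n := by exact_mod_cast hnM
  linarith

theorem stmt_3 :
    GWeakPPlus densityFilter ∧ ¬ GPPlus densityFilter ∧ ¬ GRapidPlus densityFilter := by
  exact ⟨weak_PPlus, not_PPlus, not_RapidPlus⟩
end

section
/- Let b = (b₁,b₂) : ℕ → ℕ × ℕ be a bijection and let F_p = {A ⊆ ℕ : for every k, the set {b₂(n) : n ∈ A, b₁(n) = k} is cofinite in ℕ}. Then F_p is a weak P⁺-filter and a rapid⁺ filter, but F_p is not a P⁺-filter. -/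
/-- The filter `F_p ≅ {ℕ} × C`: `A` belongs to it iff for every `k`, the set
`{b₂(n) : n ∈ A, b₁(n) = k}` is cofinite in ℕ. -/
def prodFilter (b₁ b₂ : ℕ → ℕ) : Set (Set ℕ) :=
  {A : Set ℕ | ∀ k : ℕ, (b₂ '' (A ∩ b₁ ⁻¹' {k}))ᶜ.Finite}

section aux
variable {b₁ b₂ : ℕ → ℕ} (hbij : Function.Bijective (fun n => (b₁ n, b₂ n)))
include hbij

lemma col_injOn (k : ℕ) : Set.InjOn b₂ (b₁ ⁻¹' {k}) := by
  intro x hx y hy hxy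
  exact hbij.1 (by simp_all [Prod.ext_iff])

lemma compl_image (S : Set ℕ) (k : ℕ) :
    (b₂ '' (S ∩ b₁ ⁻¹' {k}))ᶜ = b₂ '' (Sᶜ ∩ b₁ ⁻¹' {k}) := by
  ext m
  obtain ⟨n₀, hn₀⟩ := hbij.2 (k, m)
  simp only [Prod.ext_iff] at hn₀
  constructor
  · intro hm
    simp only [Set.mem_compl_iff, Set.mem_image, not_exists] at hm
    refine ⟨n₀, ⟨fun hn => hm n₀ ⟨⟨hn, hn₀.1⟩, hn₀.2⟩, hn₀.1⟩, hn₀.2⟩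
  · rintro ⟨n, ⟨hnS, hnk⟩, rfl⟩
    rintro ⟨n', ⟨hn'S, hn'k⟩, hn'⟩
    have : n' = n := hbij.1 (by simp_all [Prod.ext_iff])
    exact hnS (this ▸ hn'S)

lemma mem_prodFilter_iff (A : Set ℕ) :
    A ∈ prodFilter b₁ b₂ ↔ ∀ k, (Aᶜ ∩ b₁ ⁻¹' {k}).Finite := by
  unfold prodFilter
  refine forall_congr' fun k => ?_
  rw [compl_image hbij]
  exact ⟨fun h => h.of_finite_image (col_injOn hbij k |>.mono (Set.inter_subset_right)),
    fun h => h.image _⟩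

lemma gstat_iff (A : Set ℕ) :
    GStat (prodFilter b₁ b₂) A ↔ ∃ k, (A ∩ b₁ ⁻¹' {k}).Infinite := by
  rw [GStat, mem_prodFilter_iff hbij, not_forall]
  simp only [compl_compl]
  rfl

lemma col_infinite (k : ℕ) : (b₁ ⁻¹' {k}).Infinite := by
  have : b₁ ⁻¹' {k} = (fun n => (b₁ n, b₂ n)) ⁻¹' ({k} ×ˢ (Set.univ : Set ℕ)) := by
    ext n; simp [eq_comm]
  rw [this]
  refine Set.Infinite.preimage ?_ (by rw [hbij.2.range_eq]; exact Set.subset_univ _)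
  exact Set.infinite_prod.2 (Or.inr ⟨Set.infinite_univ, ⟨k, rfl⟩⟩)
end aux

theorem stmt_5 (b₁ b₂ : ℕ → ℕ)
    (hbij : Function.Bijective (fun n => (b₁ n, b₂ n))) :
    GWeakPPlus (prodFilter b₁ b₂) ∧ GRapidPlus (prodFilter b₁ b₂) ∧
      ¬ GPPlus (prodFilter b₁ b₂) := by
  refine ⟨?_, ?_, ?_⟩
  · -- weak P⁺
    intro A hA hmono I hI
    obtain ⟨k, hk⟩ := (gstat_iff hbij I).1 hI
    refine ⟨I ∩ b₁ ⁻¹' {k}, Set.inter_subset_left, ?_, ?_⟩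
    · refine (gstat_iff hbij _).2 ⟨k, ?_⟩
      rwa [Set.inter_assoc, Set.inter_self]
    · intro j
      refine ((mem_prodFilter_iff hbij _).1 (hA j) k).subset ?_
      rintro n ⟨⟨_, hnk⟩, hnA⟩
      exact ⟨hnA, hnk⟩
  · -- rapid⁺
    intro I hI f hf
    obtain ⟨k, hk⟩ := (gstat_iff hbij I).1 hI
    have hSinf : {n | n ∈ I ∩ b₁ ⁻¹' {k}}.Infinite := hk
    set g : ℕ → ℕ := fun n => Nat.nth (· ∈ I ∩ b₁ ⁻¹' {k}) (f n) with hgdef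
    have hgmem : ∀ n, g n ∈ I ∩ b₁ ⁻¹' {k} := fun n => Nat.nth_mem_of_infinite hSinf _
    have hg : StrictMono g := fun a c hac => (Nat.nth_lt_nth hSinf).2 (hf hac)
    have hgge : ∀ n, f n ≤ g n := fun n => Nat.le_nth (fun hfin => absurd hfin hSinf)
    have hBinf : (Set.range g).Infinite := Set.infinite_range_of_injective hg.injective
    refine ⟨Set.range g, ?_, ?_, ?_⟩
    · rintro _ ⟨n, rfl⟩; exact (hgmem n).1
    · refine (gstat_iff hbij _).2 ⟨k, ?_⟩
      have hsub : Set.range g ⊆ b₁ ⁻¹' {k} := by rintro _ ⟨n, rfl⟩; exact (hgmem n).2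
      rwa [Set.inter_eq_left.2 hsub]
    · intro n
      classical
      have hBinf' : {m | m ∈ Set.range g}.Infinite := hBinf
      rw [← Nat.count_le_iff_le_nth hBinf', Nat.count_eq_card_filter_range]
      calc ((Finset.range (f n)).filter (· ∈ Set.range g)).card ≤ ((Finset.range n).image g).card := by
              refine Finset.card_le_card ?_
              intro m hm
              simp only [Finset.mem_filter, Finset.mem_range, Set.mem_range] at hm
              obtain ⟨hmlt, j, rfl⟩ := hm
              refine Finset.mem_image.2 ⟨j, Finset.mem_range.2 ?_, rfl⟩
              by_contra hjn
              exact absurd hmlt (not_lt.2 ((hf.monotone (not_lt.1 hjn)).trans (hgge j)))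
        _ ≤ n := (Finset.card_image_le).trans (by simp)
  · -- not P⁺
    intro hP
    obtain ⟨B, hBstat, hB⟩ := hP (fun k => {n | k ≤ b₁ n})
      (fun k => (gstat_iff hbij _).2 ⟨k, ((col_infinite hbij k).mono
        (fun n hn => ⟨le_of_eq hn.symm, hn⟩))⟩)
      (fun k l hkl n hn => le_trans hkl hn)
    obtain ⟨j, hj⟩ := (gstat_iff hbij B).1 hBstat
    refine hj ((hB (j + 1)).subset ?_)
    rintro n ⟨hnB, hnk⟩
    simp only [Set.mem_preimage, Set.mem_singleton_iff] at hnk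
    exact ⟨hnB, by simp [hnk]⟩
end

section
/- Let X be a completely metrizable topological vector space and let (V_n) and (A_n) be two countable bases for the filter of 0-neighbourhoods of X such that A_n + A_{n+1} + ... + A_{n+l} ⊆ V_n for all l ≥ 0, n ≥ 1, and such that each V_n is closed. Then for every sequence (C_n) of subsets of X that is (A_n)-connected, the intersection ⋂_{n≥1} (C_n + V_{n+1}) is non-empty. -/
open Pointwise

open Filter Topology

theorem stmt_6 {X : Type*} [AddCommGroup X] [Module ℝ X] [UniformSpace X]
    [IsUniformAddGroup X] [ContinuousSMul ℝ X] [CompleteSpace X]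
    [TopologicalSpace.MetrizableSpace X]
    (V A : ℕ → Set X)
    (hV : (nhds (0 : X)).HasBasis (fun _ : ℕ => True) V)
    (hA : (nhds (0 : X)).HasBasis (fun _ : ℕ => True) A)
    (hVclosed : ∀ n, IsClosed (V n))
    (hL1 : ∀ n ≥ 1, ∀ l : ℕ, ∀ g : ℕ → X,
      (∀ j ≤ l, g j ∈ A (n + j)) → ∑ j ∈ Finset.range (l + 1), g j ∈ V n)
    (C : ℕ → Set X)
    (hC1 : (C 1).Nonempty)
    (hconn : ∀ n ≥ 2, ∀ x ∈ C (n - 1), ((x + ·) '' A n ∩ C n).Nonempty) :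
    (⋂ n, ⋂ (_ : 1 ≤ n), (C n + V (n + 1))).Nonempty := by
  classical
  have hstep : ∀ n : ℕ, ∀ y ∈ C (n+1), ∃ z, z ∈ C (n+2) ∧ z - y ∈ A (n+2) := by
    intro n y hy
    obtain ⟨z, hz1, hz2⟩ := hconn (n+2) (by omega) y (by simpa using hy)
    obtain ⟨a, ha, rfl⟩ := hz1
    exact ⟨y + a, hz2, by rwa [add_sub_cancel_left]⟩
  choose F hFC hFA using hstep
  let G : (n : ℕ) → {y : X // y ∈ C (n+1)} := fun n =>
    Nat.rec ⟨hC1.choose, hC1.choose_spec⟩ (fun k p => ⟨F k p.1 p.2, hFC k p.1 p.2⟩) n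
  let x : ℕ → X := fun n => (G n).1
  have hxC : ∀ n, x n ∈ C (n+1) := fun n => (G n).2
  have hinc : ∀ n, x (n+1) - x n ∈ A (n+2) := fun n => hFA n (x n) (G n).2
  have hV0 : ∀ i, (0:X) ∈ V i := fun i => mem_of_mem_nhds (hV.mem_of_mem trivial)
  have hA0 : ∀ i, (0:X) ∈ A i := fun i => mem_of_mem_nhds (hA.mem_of_mem trivial)
  have hdiff : ∀ i n m : ℕ, 1 ≤ i → i ≤ n + 2 → n ≤ m → x m - x n ∈ V i := by
    intro i n m hi hin hnm
    rcases eq_or_lt_of_le hnm with rfl | hlt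
    · simpa using hV0 i
    · set h : ℕ → X := fun j => x (max (i + j - 2) n) with hh
      have hil : i ≤ m + 1 := by omega
      have hg : ∀ j ≤ (m + 1 - i), h (j+1) - h j ∈ A (i + j) := by
        intro j hj
        rcases le_or_gt (i + j) (n + 1) with hle | hgt
        · have e1 : i + (j+1) - 2 = i + j - 1 := by omega
          have e2 : max (i + j - 1) n = n := by omega
          have e3 : max (i + j - 2) n = n := by omega
          simp only [hh, e1, e2, e3, sub_self]
          exact hA0 _
        · rcases eq_or_lt_of_le (Nat.succ_le_of_lt hgt) with heq | hgt2
          · -- i + j = n + 2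
            have e1 : i + (j+1) - 2 = n + 1 := by omega
            have e2 : max (n+1) n = n + 1 := by omega
            have e3 : max (i + j - 2) n = n := by omega
            have e4 : i + j = n + 2 := by omega
            have e3' : max (n + 2 - 2) n = n := by omega
            simp only [hh, e1, e2, e3, e4, e3']
            exact hinc n
          · have e1 : i + (j+1) - 2 = (i + j - 2) + 1 := by omega
            have e2 : max ((i + j - 2) + 1) n = (i + j - 2) + 1 := by omega
            have e3 : max (i + j - 2) n = i + j - 2 := by omega
            have e4 : (i + j - 2) + 2 = i + j := by omega
            have := hinc (i + j - 2)
            rw [e4] at this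
            simp only [hh, e1, e2, e3]
            exact this
      have hsum := hL1 i hi (m + 1 - i) (fun j => h (j+1) - h j) hg
      have htel : ∑ j ∈ Finset.range ((m + 1 - i) + 1), (h (j+1) - h j)
          = h ((m + 1 - i)+1) - h 0 := Finset.sum_range_sub h ((m + 1 - i)+1)
      rw [htel] at hsum
      have e5 : i + ((m + 1 - i)+1) - 2 = m := by omega
      have e6 : max m n = m := by omega
      have e7 : i + 0 - 2 ≤ n := by omega
      have e8 : max (i + 0 - 2) n = n := by omega
      simpa only [hh, e5, e6, e8] using hsum
  by_cases hcaseA : ∀ U ∈ 𝓝 (0:X), ∃ i, 1 ≤ i ∧ V i ⊆ U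
  · -- Cauchy case
    have hb : (uniformity X).HasBasis (fun _ : ℕ => True)
        (fun i => {p : X × X | p.2 - p.1 ∈ V i}) := by
      rw [uniformity_eq_comap_nhds_zero]
      exact hV.comap _
    have hW : ∀ U ∈ 𝓝 (0:X), ∃ W ∈ 𝓝 (0:X), ∀ a ∈ W, ∀ b ∈ W, a - b ∈ U := by
      intro U hU
      have hcont : Tendsto (fun p : X × X => p.1 - p.2) (𝓝 0 ×ˢ 𝓝 0) (𝓝 (0:X)) := by
        have := continuous_sub.tendsto ((0:X), (0:X))
        rw [nhds_prod_eq] at this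
        simpa using this
      have h1 := hcont hU
      rw [Filter.mem_map, Filter.mem_prod_iff] at h1
      obtain ⟨W1, hW1, W2, hW2, hsub⟩ := h1
      exact ⟨W1 ∩ W2, Filter.inter_mem hW1 hW2,
        fun a ha b hb => hsub (Set.mk_mem_prod ha.1 hb.2)⟩
    have hcauchy : CauchySeq x := by
      rw [hb.cauchySeq_iff]
      intro i _
      obtain ⟨W, hWn, hWsub⟩ := hW (V i) (hV.mem_of_mem trivial)
      obtain ⟨j, hj1, hjsub⟩ := hcaseA W hWn
      refine ⟨j, fun m hm n hn => ?_⟩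
      have h1 : x n - x j ∈ W := hjsub (hdiff j j n hj1 (by omega) hn)
      have h2 : x m - x j ∈ W := hjsub (hdiff j j m hj1 (by omega) hm)
      have h3 := hWsub _ h1 _ h2
      simpa only [Set.mem_setOf_eq, sub_sub_sub_cancel_right] using h3
    obtain ⟨z, hz⟩ := cauchySeq_tendsto_of_complete hcauchy
    refine ⟨z, ?_⟩
    simp only [Set.mem_iInter]
    intro n hn
    have hmem : ∀ m ≥ n - 1, x m - x (n-1) ∈ V (n+1) := fun m hm =>
      hdiff (n+1) (n-1) m (by omega) (by omega) hm
    have hlim : Tendsto (fun m => x m - x (n-1)) atTop (𝓝 (z - x (n-1))) :=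
      hz.sub_const _
    have hzin : z - x (n-1) ∈ V (n+1) :=
      (hVclosed (n+1)).mem_of_tendsto hlim (Filter.eventually_atTop.2 ⟨n-1, hmem⟩)
    have hC' : x (n-1) ∈ C n := by
      have := hxC (n-1); rwa [Nat.sub_add_cancel hn] at this
    have := Set.add_mem_add hC' hzin
    simpa using this
  · push_neg at hcaseA
    obtain ⟨U₀, hU₀, hbad⟩ := hcaseA
    have hV0min : ∀ U ∈ 𝓝 (0:X), V 0 ⊆ U := by
      intro U hU
      obtain ⟨i, -, hi⟩ := hV.mem_iff.1 (Filter.inter_mem hU hU₀)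
      have hi0 : i = 0 := by
        by_contra hne
        exact hbad i (by omega) (hi.trans Set.inter_subset_right)
      subst hi0
      exact hi.trans Set.inter_subset_left
    letI : MetricSpace X := TopologicalSpace.metrizableSpaceMetric X
    have hsing : ∀ y : X, y ∈ V 0 → y = 0 := by
      intro y hy
      by_contra hne
      have h1 : {y}ᶜ ∈ 𝓝 (0:X) := compl_singleton_mem_nhds (Ne.symm hne)
      exact (hV0min _ h1 hy) rfl
    have h0nbhd : {(0:X)} ∈ 𝓝 (0:X) :=
      Filter.mem_of_superset (hV.mem_of_mem trivial) (fun y hy => hsing y hy)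
    have hall : ∀ w : X, w = 0 := by
      intro w
      have hc : Tendsto (fun t : ℝ => t • w) (𝓝 0) (𝓝 (0:X)) := by
        have := (show Continuous (fun t : ℝ => t • w) from continuous_id.smul (continuous_const (y := w))).tendsto (0:ℝ)
        simpa using this
      have hpre : (fun t : ℝ => t • w) ⁻¹' {0} ∈ 𝓝 (0:ℝ) := hc h0nbhd
      obtain ⟨ε, hε, hball⟩ := Metric.mem_nhds_iff.1 hpre
      have ht : (ε/2) • w = 0 := by
        have : (ε/2 : ℝ) ∈ Metric.ball (0:ℝ) ε := by
          rw [Metric.mem_ball, Real.dist_eq, sub_zero, abs_of_pos (by linarith)]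
          linarith
        exact hball this
      have hne : (ε/2 : ℝ) ≠ 0 := by positivity
      calc w = (ε/2)⁻¹ • ((ε/2) • w) := (inv_smul_smul₀ hne w).symm
        _ = 0 := by rw [ht, smul_zero]
    refine ⟨0, ?_⟩
    simp only [Set.mem_iInter]
    intro n hn
    have hC' : x (n-1) ∈ C n := by
      have := hxC (n-1); rwa [Nat.sub_add_cancel hn] at this
    have := Set.add_mem_add hC' (hV0 (n+1))
    rw [hall (x (n-1))] at this
    simpa using this
end

section
/- Let X be a real vector space and p, q₁, ..., q_k seminorms on X. If each q_i is unbounded on the closed unit ball B_p = {x : p(x) ≤ 1}, then the pointwise minimum min(q₁,...,q_k) is unbounded on B_p. -/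
private lemma aux_list {X : Type*} [AddCommGroup X] [Module ℝ X]
    (p : Seminorm ℝ X) (l : List (Seminorm ℝ X))
    (h : ∀ q ∈ l, ∀ C : ℝ, ∃ x : X, p x ≤ 1 ∧ C < q x) :
    ∀ C : ℝ, ∃ x : X, p x ≤ 1 ∧ ∀ q ∈ l, C < q x := by
  induction l with
  | nil =>
    intro C
    refine ⟨0, by simp, by simp⟩
  | cons q l ih =>
    intro C
    have hq := h q List.mem_cons_self
    have hl : ∀ r ∈ l, ∀ C : ℝ, ∃ x : X, p x ≤ 1 ∧ C < r x :=
      fun r hr => h r (List.mem_cons_of_mem q hr)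
    by_cases hA : ∃ x : X, p x ≤ 1 ∧ (∀ r ∈ l, C < r x) ∧ C < q x
    · obtain ⟨x, hx1, hx2, hx3⟩ := hA
      exact ⟨x, hx1, by
        intro r hr
        rcases List.mem_cons.1 hr with rfl | hr
        · exact hx3
        · exact hx2 r hr⟩
    · push_neg at hA
      -- hA : ∀ x, p x ≤ 1 → (∀ r ∈ l, C < r x) → q x ≤ C
      obtain ⟨y, hy1, hy2⟩ := hq (3 * C + 1)
      set L : ℝ := (l.map (fun r => r y)).sum with hL
      have hLnn : 0 ≤ L := List.sum_nonneg (by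
        intro a ha
        simp only [List.mem_map] at ha
        obtain ⟨r, _, rfl⟩ := ha
        exact apply_nonneg r y)
      have hLle : ∀ r ∈ l, r y ≤ L := by
        intro r hr
        apply List.single_le_sum (l := l.map fun r => r y)
        · intro a ha
          simp only [List.mem_map] at ha
          obtain ⟨s, _, rfl⟩ := ha
          exact apply_nonneg s y
        · exact List.mem_map_of_mem hr
      obtain ⟨x, hx1, hx2⟩ := ih hl (max C (2 * C + L + 1))
      have hx2' : ∀ r ∈ l, C < r x := fun r hr => lt_of_le_of_lt (le_max_left _ _) (hx2 r hr)
      have hqx : q x ≤ C := hA x hx1 hx2'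
      refine ⟨(1/2 : ℝ) • (x + y), ?_, ?_⟩
      · have : p ((1/2 : ℝ) • (x + y)) = (1/2) * p (x + y) := by
          rw [map_smul_eq_mul]; norm_num
        rw [this]
        have := map_add_le_add p x y
        nlinarith
      · intro r hr
        rcases List.mem_cons.1 hr with rfl | hr
        · -- r = q
          have h1 : r y ≤ r (x + y) + r x := by
            have := map_add_le_add r (x + y) (-x)
            simpa [map_neg_eq_map] using this
          have : r ((1/2 : ℝ) • (x + y)) = (1/2) * r (x + y) := by
            rw [map_smul_eq_mul]; norm_num
          rw [this]
          nlinarith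
        · -- r ∈ l
          have h1 : r x ≤ r (x + y) + r y := by
            have := map_add_le_add r (x + y) (-y)
            simpa [map_neg_eq_map] using this
          have h2 : 2 * C + L + 1 < r x := lt_of_le_of_lt (le_max_right _ _) (hx2 r hr)
          have h3 : r y ≤ L := hLle r hr
          have : r ((1/2 : ℝ) • (x + y)) = (1/2) * r (x + y) := by
            rw [map_smul_eq_mul]; norm_num
          rw [this]
          nlinarith

theorem stmt_8 {X : Type*} [AddCommGroup X] [Module ℝ X]
    (k : ℕ) (hk : 0 < k) (p : Seminorm ℝ X) (q : Fin k → Seminorm ℝ X)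
    (hunb : ∀ i, ¬ ∃ C : ℝ, ∀ x : X, p x ≤ 1 → q i x ≤ C) :
    ¬ ∃ C : ℝ, ∀ x : X, p x ≤ 1 → (⨅ i, q i x) ≤ C := by
  haveI : Nonempty (Fin k) := ⟨⟨0, hk⟩⟩
  rintro ⟨C, hC⟩
  have h : ∀ r ∈ (List.finRange k).map q, ∀ D : ℝ, ∃ x : X, p x ≤ 1 ∧ D < r x := by
    intro r hr D
    simp only [List.mem_map] at hr
    obtain ⟨i, _, rfl⟩ := hr
    have := hunb i
    push_neg at this
    obtain ⟨x, hx1, hx2⟩ := this D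
    exact ⟨x, hx1, hx2⟩
  obtain ⟨x, hx1, hx2⟩ := aux_list p ((List.finRange k).map q) h C
  have hall : ∀ i, C < q i x := by
    intro i
    exact hx2 (q i) (List.mem_map_of_mem (f := q) (List.mem_finRange i))
  have : C < ⨅ i, q i x := by
    rw [iInf, ((Set.finite_range _).lt_csInf_iff (Set.range_nonempty _))]
    rintro _ ⟨i, rfl⟩
    exact hall i
  exact absurd (hC x hx1) (not_le.2 this)
end

section
/- If F is a free filter on ℕ which is both rapid⁺ and a P⁺-filter, then every Banach space X is F-barrelled; that is, for every F-barrel-system (B_i) in X there exists a 0-neighbourhood U in X and a set A ∈ F such that U ⊆ B_i for all i ∈ A. -/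
/-- A barrel: an absorbing, balanced, closed, convex set. -/
def IsBarrel {X : Type*} [AddCommGroup X] [Module ℝ X] [TopologicalSpace X]
    (B : Set X) : Prop :=
  Absorbent ℝ B ∧ Balanced ℝ B ∧ IsClosed B ∧ Convex ℝ B

theorem stmt_9 (F : Filter ℕ) (hfree : F ≤ Filter.cofinite) [F.NeBot]
    (hrapid : RapidPlus F) (hP : PPlus F)
    {X : Type*} [NormedAddCommGroup X] [NormedSpace ℝ X] [CompleteSpace X]
    (B : ℕ → Set X) (hbarrel : ∀ i, IsBarrel (B i))
    (hsys : ∀ x : X, ∃ t : ℝ, 0 < t ∧ {i | t • x ∈ B i} ∈ F) :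
    ∃ U ∈ nhds (0 : X), ∃ A ∈ F, ∀ i ∈ A, U ⊆ B i := by
  classical
  by_contra hcon
  push_neg at hcon
  have hzmem : ∀ i, (0 : X) ∈ B i := fun i => (hbarrel i).1.zero_mem
  have hG : ∀ δ : ℝ, 0 < δ → {i | Metric.ball (0 : X) δ ⊆ B i} ∉ F := by
    intro δ hδ hmem
    obtain ⟨i, hi, hns⟩ := hcon (Metric.ball 0 δ) (Metric.ball_mem_nhds 0 hδ) _ hmem
    exact hns hi
  set σ : ℕ → ℝ := fun n => (1/8 : ℝ) ^ n / 12 with hσ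
  have hσpos : ∀ n, 0 < σ n := fun n => by positivity
  set I : ℕ → Set ℕ := fun n => {i | ¬ Metric.ball (0 : X) (σ n) ⊆ B i} with hI
  have hIstat : ∀ n, FStat F (I n) := by
    intro n
    have : (I n)ᶜ = {i | Metric.ball (0 : X) (σ n) ⊆ B i} := by
      ext i; simp [hI]
    rw [FStat, this]
    exact hG (σ n) (hσpos n)
  have hIanti : Antitone I := by
    intro m n hmn i hi
    have hσle : σ n ≤ σ m := by
      have : (1/8 : ℝ) ^ n ≤ (1/8 : ℝ) ^ m :=
        pow_le_pow_of_le_one (by norm_num) (by norm_num) hmn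
      simp only [hσ]
      linarith
    intro hsub
    exact hi ((Metric.ball_subset_ball hσle).trans hsub)
  obtain ⟨S, hSstat, hSfin⟩ := hP I hIstat hIanti
  set N : ℕ → ℕ := fun n => (hSfin n).toFinset.sup id with hN
  have hNmono : Monotone N := by
    intro m n hmn
    apply Finset.sup_mono
    rw [Set.Finite.toFinset_subset_toFinset]
    exact fun i hi => ⟨hi.1, fun h => hi.2 (hIanti hmn h)⟩
  set f : ℕ → ℕ := fun n => n + 1 + N n with hf
  have hfmono : StrictMono f := by
    intro a b hab
    have := hNmono hab.le
    simp only [hf]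
    omega
  obtain ⟨Bs, hBsub, hBstat, hnth⟩ := hrapid S hSstat f hfmono
  have hBinf : Bs.Infinite := by
    by_contra h
    rw [Set.not_infinite] at h
    exact hBstat (hfree h.compl_mem_cofinite)
  set b : ℕ → ℕ := fun n => Nat.nth (· ∈ Bs) n with hb
  have hbBs : ∀ n, b n ∈ Bs := fun n => Nat.nth_mem_of_infinite hBinf n
  have hbI : ∀ n, b n ∈ I n := by
    intro n
    by_contra hni
    have h1 : b n ∈ S \ I n := ⟨hBsub (hbBs n), hni⟩
    have h2 : b n ≤ N n := Finset.le_sup (f := id) ((hSfin n).mem_toFinset.2 h1)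
    have h3 : f n ≤ b n := hnth n
    simp only [hf] at h3
    omega
  have hw : ∀ n, ∃ w : X, ‖w‖ < σ n ∧ w ∉ B (b n) := by
    intro n
    obtain ⟨w, hw1, hw2⟩ := Set.not_subset.mp (hbI n)
    exact ⟨w, mem_ball_zero_iff.mp hw1, hw2⟩
  choose w hwn hwB using hw
  have hsep : ∀ n, ∃ (g : X →L[ℝ] ℝ) (u : ℝ), (∀ a ∈ B (b n), g a < u) ∧ u < g (w n) :=
    fun n => geometric_hahn_banach_closed_point ((hbarrel (b n)).2.2.2) ((hbarrel (b n)).2.2.1)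
      (hwB n)
  choose g u hgu hug using hsep
  have hu0 : ∀ n, 0 < u n := by
    intro n
    have := hgu n 0 (hzmem (b n))
    simpa using this
  have habs : ∀ n, ∀ a ∈ B (b n), |g n a| ≤ u n := by
    intro n a ha
    have hna : -a ∈ B (b n) := by
      have := (hbarrel (b n)).2.1.smul_mem (a := (-1 : ℝ)) (by norm_num) ha
      simpa using this
    have h1 := hgu n a ha
    have h2 := hgu n (-a) hna
    rw [map_neg] at h2
    rw [abs_le]; constructor <;> linarith
  have hgn0 : ∀ n, 0 < ‖g n‖ := by
    intro n
    by_contra hle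
    push_neg at hle
    have heq : ‖g n‖ = 0 := le_antisymm hle (norm_nonneg _)
    have h1 : g n (w n) ≤ ‖g n (w n)‖ := le_abs_self _
    have h2 : ‖g n (w n)‖ ≤ ‖g n‖ * ‖w n‖ := (g n).le_opNorm _
    rw [heq, zero_mul] at h2
    have := hug n
    have := hu0 n
    linarith
  have huσ : ∀ n, u n < ‖g n‖ * σ n := by
    intro n
    have h1 : g n (w n) ≤ ‖g n‖ * ‖w n‖ := (le_abs_self _).trans ((g n).le_opNorm _)
    have h2 : ‖g n‖ * ‖w n‖ ≤ ‖g n‖ * σ n :=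
      mul_le_mul_of_nonneg_left (hwn n).le (norm_nonneg _)
    have := hug n
    linarith
  -- escape step
  have hz : ∀ (n : ℕ) (s : X), ∃ z : X, ‖z‖ ≤ (1/4 : ℝ) ^ n ∧
      (1/4 : ℝ) ^ n * ‖g n‖ / 2 ≤ |g n (s + z)| := by
    intro n s
    obtain ⟨v, hv1, hv2⟩ := (g n).exists_lt_apply_of_lt_opNorm (r := ‖g n‖ / 2)
      (by linarith [hgn0 n])
    rw [Real.norm_eq_abs] at hv2
    set c : ℝ := if 0 ≤ g n s then 1 else -1 with hc
    set e : ℝ := if 0 ≤ g n v then 1 else -1 with he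
    have hev : e * g n v = |g n v| := by
      rw [he]; rcases le_or_gt 0 (g n v) with h | h
      · rw [if_pos h, one_mul, abs_of_nonneg h]
      · rw [if_neg (not_le.mpr h), neg_one_mul, abs_of_neg h]
    refine ⟨(c * e * (1/4 : ℝ) ^ n) • v, ?_, ?_⟩
    · rw [norm_smul]
      have hce : |c * e| = 1 := by
        rw [abs_mul, hc, he]
        rcases le_or_gt 0 (g n s) with h | h <;> rcases le_or_gt 0 (g n v) with h' | h' <;>
          simp [h, h', not_le.mpr]
      rw [Real.norm_eq_abs, abs_mul, hce, one_mul, abs_of_nonneg (by positivity)]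
      calc (1/4 : ℝ) ^ n * ‖v‖ ≤ (1/4 : ℝ) ^ n * 1 :=
            mul_le_mul_of_nonneg_left hv1.le (by positivity)
        _ = (1/4 : ℝ) ^ n := mul_one _
    · have happ : g n (s + (c * e * (1/4 : ℝ) ^ n) • v)
          = g n s + c * ((1/4 : ℝ) ^ n * |g n v|) := by
        rw [map_add, map_smul, smul_eq_mul, ← hev]
        ring
      rw [happ, hc]
      have hgv : (1/4 : ℝ) ^ n * ‖g n‖ / 2 ≤ (1/4 : ℝ) ^ n * |g n v| := by
        have : ‖g n‖ / 2 ≤ |g n v| := hv2.le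
        have h4 : (0:ℝ) < (1/4 : ℝ) ^ n := by positivity
        calc (1/4 : ℝ) ^ n * ‖g n‖ / 2 = (1/4 : ℝ) ^ n * (‖g n‖ / 2) := by ring
          _ ≤ (1/4 : ℝ) ^ n * |g n v| := mul_le_mul_of_nonneg_left this h4.le
      rcases le_or_gt 0 (g n s) with h | h
      · rw [if_pos h, one_mul]
        have : (1/4 : ℝ) ^ n * |g n v| ≤ g n s + (1/4 : ℝ) ^ n * |g n v| := by linarith
        exact hgv.trans (this.trans (le_abs_self _))
      · rw [if_neg (not_le.mpr h), neg_one_mul]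
        have h1 : g n s + -((1/4 : ℝ) ^ n * |g n v|) ≤ -((1/4 : ℝ) ^ n * |g n v|) := by linarith
        have h2 : (1/4 : ℝ) ^ n * |g n v| ≤ |g n s + -((1/4 : ℝ) ^ n * |g n v|)| := by
          rw [abs_of_nonpos (show g n s + -((1/4 : ℝ) ^ n * |g n v|) ≤ 0 by
            nlinarith [abs_nonneg (g n v), pow_pos (show (0:ℝ) < 1/4 by norm_num) n])]
          linarith
        exact hgv.trans h2
  choose zf hzn hza using hz
  set s : ℕ → X := fun n => Nat.rec 0 (fun k sk => sk + zf k sk) n with hs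
  set z : ℕ → X := fun n => zf n (s n) with hzdef
  have hsucc : ∀ n, s (n + 1) = s n + z n := fun n => rfl
  have hznorm : ∀ n, ‖z n‖ ≤ (1/4 : ℝ) ^ n := fun n => hzn n (s n)
  have hzabs : ∀ n, (1/4 : ℝ) ^ n * ‖g n‖ / 2 ≤ |g n (s (n + 1))| := fun n => hza n (s n)
  have hsummable : Summable z :=
    Summable.of_norm_bounded (summable_geometric_of_lt_one (by norm_num) (by norm_num)) hznorm
  set x : X := ∑' n, z n with hx
  have hpartial : ∀ n, ∑ j ∈ Finset.range n, z j = s n := by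
    intro n
    induction n with
    | zero => rfl
    | succ k ih => rw [Finset.sum_range_succ, ih, hsucc]
  have htail : ∀ n, ‖x - s (n + 1)‖ ≤ (1/4 : ℝ) ^ n / 3 := by
    intro n
    have h1 := Summable.sum_add_tsum_nat_add (n + 1) hsummable
    have h2 : x - s (n + 1) = ∑' i, z (i + (n + 1)) := by
      rw [← hpartial (n + 1), sub_eq_iff_eq_add, add_comm]
      exact h1.symm
    rw [h2]
    have hsnorm : Summable (fun i => (1/4 : ℝ) ^ (i + (n + 1))) := by
      simp_rw [pow_add]
      exact (summable_geometric_of_lt_one (by norm_num) (by norm_num)).mul_right _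
    have h3 : ‖∑' i, z (i + (n + 1))‖ ≤ ∑' i, (1/4 : ℝ) ^ (i + (n + 1)) := by
      apply tsum_of_norm_bounded (g := fun i => (1/4 : ℝ) ^ (i + (n+1)))
      · exact hsnorm.hasSum
      · exact fun i => hznorm _
    have h4 : ∑' i, (1/4 : ℝ) ^ (i + (n + 1)) = (1/4 : ℝ) ^ n / 3 := by
      simp_rw [pow_add]
      rw [tsum_mul_right, tsum_geometric_of_lt_one (by norm_num) (by norm_num)]
      ring
    rw [h4] at h3
    exact h3
  have hxout : ∀ n, ((1/2 : ℝ) ^ n) • x ∉ B (b n) := by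
    intro n hmem
    have h1 : |g n (((1/2 : ℝ) ^ n) • x)| ≤ u n := habs n _ hmem
    have h2 : |g n (x - s (n + 1))| ≤ ‖g n‖ * ((1/4 : ℝ) ^ n / 3) := by
      calc |g n (x - s (n + 1))| = ‖g n (x - s (n + 1))‖ := (Real.norm_eq_abs _).symm
        _ ≤ ‖g n‖ * ‖x - s (n + 1)‖ := (g n).le_opNorm _
        _ ≤ ‖g n‖ * ((1/4 : ℝ) ^ n / 3) :=
            mul_le_mul_of_nonneg_left (htail n) (norm_nonneg _)
    have h3 : |g n x| ≥ (1/4 : ℝ) ^ n * ‖g n‖ / 2 - ‖g n‖ * ((1/4 : ℝ) ^ n / 3) := by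
      have h4 : g n x = g n (s (n + 1)) + g n (x - s (n + 1)) := by
        rw [← map_add]; congr 1; abel
      have h5 := hzabs n
      have h6 : |g n (s (n + 1))| - |g n (x - s (n + 1))| ≤ |g n x| := by
        have h := abs_sub_abs_le_abs_sub (g n (s (n + 1))) (-(g n (x - s (n + 1))))
        rw [abs_neg, sub_neg_eq_add, ← h4] at h
        exact h
      linarith
    have h7 : |g n (((1/2 : ℝ) ^ n) • x)| = (1/2 : ℝ) ^ n * |g n x| := by
      rw [map_smul]
      simp [abs_mul, abs_of_nonneg (show (0:ℝ) ≤ (1/2 : ℝ) ^ n by positivity)]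
    have h8 := huσ n
    simp only [hσ] at h8
    have hpow : (1/2 : ℝ) ^ n * (1/4 : ℝ) ^ n = (1/8 : ℝ) ^ n := by
      rw [← mul_pow]; norm_num
    have hg := hgn0 n
    nlinarith [pow_pos (show (0:ℝ) < 1/2 by norm_num) n,
      pow_pos (show (0:ℝ) < 1/8 by norm_num) n,
      mul_le_mul_of_nonneg_left h3.le (pow_pos (show (0:ℝ) < 1/2 by norm_num) n).le]
  obtain ⟨t, ht, hA⟩ := hsys x
  obtain ⟨K, hK⟩ : ∃ K : ℕ, (1/2 : ℝ) ^ K < t := exists_pow_lt_of_lt_one ht (by norm_num)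
  have hsub : {i | t • x ∈ B i} ∩ Bs ⊆ b '' Set.Iio K := by
    rintro i ⟨hiA, hiB⟩
    refine ⟨Nat.count (· ∈ Bs) i, ?_, Nat.nth_count hiB⟩
    set k := Nat.count (· ∈ Bs) i with hk
    have hbk : b k = i := Nat.nth_count hiB
    simp only [Set.mem_Iio]
    by_contra hkK
    push_neg at hkK
    have hle : (1/2 : ℝ) ^ k ≤ (1/2 : ℝ) ^ K :=
      pow_le_pow_of_le_one (by norm_num) (by norm_num) hkK
    have hlt : (1/2 : ℝ) ^ k < t := hle.trans_lt hK
    have hmem : ((1/2 : ℝ) ^ k) • x ∈ B (b k) := by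
      have heq : ((1/2 : ℝ) ^ k) • x = ((1/2 : ℝ) ^ k / t) • (t • x) := by
        rw [smul_smul, div_mul_cancel₀]
        exact ht.ne'
      rw [heq, hbk]
      apply (hbarrel i).2.1.smul_mem
      · rw [Real.norm_eq_abs, abs_of_nonneg (by positivity)]
        rw [div_le_one ht]
        exact hlt.le
      · exact hiA
    exact hxout k hmem
  have hfinite : ({i | t • x ∈ B i} ∩ Bs).Finite := ((Set.finite_Iio K).image b).subset hsub
  have hBc : Bsᶜ ∈ F := by
    have hcof : ({i | t • x ∈ B i} ∩ Bs)ᶜ ∈ F := hfree hfinite.compl_mem_cofinite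
    have hint := Filter.inter_mem hA hcof
    apply Filter.mem_of_superset hint
    rintro i ⟨hi1, hi2⟩ hiB
    exact hi2 ⟨hi1, hiB⟩
  exact hBstat hBc
end

section
/- Let X and Y be topological vector spaces with X F-barrelled (F a filter on ℕ) and Y locally convex. Then every pointwise F-bounded sequence (T_i) of continuous linear maps from X to Y is F-equicontinuous. -/
/-- `X` is `F`-barrelled. -/
def FBarrelled (F : Filter ℕ) (X : Type*) [AddCommGroup X] [Module ℝ X]
    [TopologicalSpace X] : Prop :=
  ∀ B : ℕ → Set X, (∀ i, IsBarrel (B i)) →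
    (∀ x : X, ∃ t : ℝ, 0 < t ∧ {i | t • x ∈ B i} ∈ F) →
    ∃ U ∈ nhds (0 : X), {i | U ⊆ B i} ∈ F

theorem stmt_10 (F : Filter ℕ)
    {X Y : Type*} [AddCommGroup X] [Module ℝ X] [TopologicalSpace X]
    [IsTopologicalAddGroup X] [ContinuousSMul ℝ X]
    [AddCommGroup Y] [Module ℝ Y] [TopologicalSpace Y]
    [IsTopologicalAddGroup Y] [ContinuousSMul ℝ Y] [LocallyConvexSpace ℝ Y]
    (hX : FBarrelled F X)
    (T : ℕ → X →L[ℝ] Y)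
    (hpb : ∀ x : X, ∀ V ∈ nhds (0 : Y), ∃ t : ℝ, 0 < t ∧ {i | t • T i x ∈ V} ∈ F) :
    ∀ V ∈ nhds (0 : Y), ∃ U ∈ nhds (0 : X), {i | ∀ x ∈ U, T i x ∈ V} ∈ F := by
  intro V hV
  -- regular space: closed neighbourhood C ⊆ V
  obtain ⟨C, hC_nhds, hC_closed, hCV⟩ := exists_mem_nhds_isClosed_subset hV
  -- absolutely convex neighbourhood W ⊆ C
  obtain ⟨W, ⟨hW_nhds, hW_bal, hW_conv⟩, hWC⟩ :=
    (nhds_hasBasis_absConvex ℝ Y).mem_iff.mp hC_nhds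
  -- B := closure W is a barrel contained in V
  set B : Set Y := closure W with hB_def
  have hB_nhds : B ∈ nhds (0 : Y) := Filter.mem_of_superset hW_nhds subset_closure
  have hB_closed : IsClosed B := isClosed_closure
  have hB_bal : Balanced ℝ B := hW_bal.closure
  have hB_conv : Convex ℝ B := hW_conv.closure
  have hBV : B ⊆ V := (hC_closed.closure_subset_iff.mpr hWC).trans hCV
  -- barrel system
  set Bi : ℕ → Set X := fun i => (T i) ⁻¹' B with hBi_def
  have hBarrel : ∀ i, IsBarrel (Bi i) := by
    intro i
    refine ⟨?_, ?_, hB_closed.preimage (T i).continuous, hB_conv.linear_preimage (T i).toLinearMap⟩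
    · intro x
      have h := (absorbent_nhds_zero (𝕜 := ℝ) hB_nhds) (T i x)
      rw [absorbs_iff_eventually_cobounded_mapsTo] at h ⊢
      filter_upwards [h] with c hc z hz
      have := hc (Set.mem_singleton (T i x))
      simp only [Set.mem_singleton_iff] at hz
      subst hz
      show T i (c⁻¹ • z) ∈ B
      rw [map_smul]
      exact this
    · intro a ha x hx
      obtain ⟨y, hy, rfl⟩ := hx
      show T i (a • y) ∈ B
      rw [map_smul]
      exact hB_bal a ha (Set.smul_mem_smul_set hy)
  have hpoint : ∀ x : X, ∃ t : ℝ, 0 < t ∧ {i | t • x ∈ Bi i} ∈ F := by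
    intro x
    obtain ⟨t, ht, htF⟩ := hpb x B hB_nhds
    refine ⟨t, ht, ?_⟩
    convert htF using 2 with i
    simp [hBi_def, Set.mem_preimage, map_smul]
  obtain ⟨U, hU_nhds, hUF⟩ := hX Bi hBarrel hpoint
  refine ⟨U, hU_nhds, Filter.mem_of_superset hUF ?_⟩
  intro i hi x hx
  exact hBV (hi hx)
end

section
/- Let X be an infinite-dimensional metrizable locally convex topological vector space which is not normable, and let F be a free filter on ℕ. If every pointwise F-bounded sequence of continuous linear functionals on X is F-equicontinuous, then F is a P⁺-filter. -/
open Filter Set Pointwise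

lemma exists_good_seq {α : Type*} (Good : α → Prop) (R : α → ℕ → α → Prop)
    (a0 : α) (h0 : Good a0)
    (hstep : ∀ a, Good a → ∀ k, ∃ b, Good b ∧ R a k b) :
    ∃ u : ℕ → α, ∀ k, Good (u k) ∧ R (u k) k (u (k+1)) := by
  choose f hf1 hf2 using hstep
  let v : ℕ → {a // Good a} := fun k =>
    Nat.rec ⟨a0, h0⟩ (fun k ih => ⟨f ih.1 ih.2 k, hf1 ih.1 ih.2 k⟩) k
  exact ⟨fun k => (v k).1, fun k => ⟨(v k).2, hf2 (v k).1 (v k).2 k⟩⟩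

lemma aux_sep {X : Type*} [AddCommGroup X] [Module ℝ X] [TopologicalSpace X]
    [IsTopologicalAddGroup X] [ContinuousSMul ℝ X]
    {B S : Set X} (hB0 : (0:X) ∈ B) (hBbal : Balanced ℝ B) (hBconv : Convex ℝ B)
    (hBopen : IsOpen B) (habs : ¬ Absorbs ℝ B S) (m : ℕ) :
    ∃ (g : X →L[ℝ] ℝ) (y : X), y ∈ S ∧ g y = 2 ∧ ∀ u ∈ B, |g u| ≤ 1/(m+1) := by
  rw [absorbs_iff_norm] at habs
  push_neg at habs
  obtain ⟨c, hc, hsub⟩ := habs (2*(m+1))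
  rw [Set.not_subset] at hsub
  obtain ⟨y, hyS, hyc⟩ := hsub
  set r : ℝ := 2*(m+1) with hr
  have hrpos : 0 < r := by positivity
  have hy : y ∉ (r • B : Set X) := fun h => hyc (hBbal.smul_mono (by rwa [Real.norm_of_nonneg hrpos.le]) h)
  obtain ⟨f, hf⟩ := geometric_hahn_banach_open_point (hBconv.smul r) (hBopen.smul₀ hrpos.ne') hy
  have h0mem : (0:X) ∈ r • B := ⟨0, hB0, smul_zero r⟩
  have hfy : 0 < f y := by have := hf 0 h0mem; simpa using this
  refine ⟨(2 / f y) • f, y, hyS, ?_, ?_⟩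
  · simp only [ContinuousLinearMap.smul_apply, smul_eq_mul]
    field_simp
  · intro u hu
    have h1 : f (r • u) < f y := hf _ ⟨u, hu, rfl⟩
    have h2 : f (r • (-u)) < f y := hf _ ⟨-u, hBbal.neg_mem_iff.2 hu, rfl⟩
    rw [map_smul, smul_eq_mul] at h1 h2
    rw [map_neg] at h2
    have habs0 : r * |f u| < f y := by
      rcases abs_cases (f u) with h | h <;> rw [h.1] <;> nlinarith
    have habs' : |f u| < f y / r := (lt_div_iff₀ hrpos).2 (by linarith [habs0])
    have : |(2 / f y) * f u| = (2 / f y) * |f u| := by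
      rw [abs_mul, abs_of_pos (by positivity)]
    rw [ContinuousLinearMap.smul_apply, smul_eq_mul, this]
    have h3 : (2 / f y) * |f u| < (2 / f y) * (f y / r) := by
      exact mul_lt_mul_of_pos_left habs' (by positivity)
    have h4 : (2 / f y) * (f y / r) = 2 / r := by field_simp
    rw [hr] at h4
    have : (1:ℝ)/(m+1) = 2/(2*(m+1)) := by field_simp
    rw [this]
    exact le_of_lt (h3.trans_eq h4)
theorem stmt_11 (F : Filter ℕ) (hfree : F ≤ Filter.cofinite) [F.NeBot]
    {X : Type*} [AddCommGroup X] [Module ℝ X] [TopologicalSpace X]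
    [IsTopologicalAddGroup X] [ContinuousSMul ℝ X] [LocallyConvexSpace ℝ X]
    [TopologicalSpace.MetrizableSpace X]
    (hinf : ¬ FiniteDimensional ℝ X)
    (hnotnorm : ∀ U ∈ nhds (0 : X), ¬ Bornology.IsVonNBounded ℝ U)
    (hubp : ∀ φ : ℕ → X →L[ℝ] ℝ,
      (∀ x : X, ∃ C : ℝ, 0 < C ∧ {n | |φ n x| ≤ C} ∈ F) →
      ∃ U ∈ nhds (0 : X), ∃ A ∈ F, ∀ x ∈ U, ∀ n ∈ A, |φ n x| ≤ 1) :
    PPlus F := by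
  classical
  by_contra hP
  rw [PPlus] at hP
  push_neg at hP
  obtain ⟨A, hstat, hanti, hbad⟩ := hP
  -- countable antitone basis of neighborhoods of 0
  obtain ⟨V, hV⟩ := (nhds (0:X)).exists_antitone_basis
  -- recursive construction of neighborhoods
  have hstep : ∀ s : Set X,
      (s ∈ nhds (0:X) ∧ Balanced ℝ s ∧ Convex ℝ s ∧ IsOpen s) → ∀ k : ℕ,
      ∃ t, (t ∈ nhds (0:X) ∧ Balanced ℝ t ∧ Convex ℝ t ∧ IsOpen t) ∧
        (t ⊆ s ∧ t ⊆ V k ∧ ¬ Absorbs ℝ t s) := by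
    intro s hs k
    have hnb := hnotnorm s hs.1
    rw [Bornology.IsVonNBounded] at hnb
    push_neg at hnb
    obtain ⟨W, hW, hWabs⟩ := hnb
    have hmem : W ∩ V k ∩ s ∈ nhds (0:X) :=
      Filter.inter_mem (Filter.inter_mem hW (hV.1.mem_of_mem trivial)) hs.1
    obtain ⟨t, ⟨ht0, htopen, htbal, htconv⟩, htsub⟩ :=
      (nhds_hasBasis_absConvex_open ℝ X).mem_iff.1 hmem
    exact ⟨t, ⟨htopen.mem_nhds ht0, htbal, htconv, htopen⟩,
      fun x hx => (htsub hx).2, fun x hx => (htsub hx).1.2,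
      fun habs => hWabs (habs.mono_left fun x hx => (htsub hx).1.1)⟩
  obtain ⟨t0, ht0, _⟩ := hstep Set.univ
    ⟨Filter.univ_mem, balanced_univ, convex_univ, isOpen_univ⟩ 0
  obtain ⟨U, hU⟩ := exists_good_seq _ _ t0 ht0 hstep
  have hUnhds : ∀ k, U k ∈ nhds (0:X) := fun k => (hU k).1.1
  have hUanti : Antitone U := antitone_nat_of_succ_le fun k => (hU k).2.1
  -- functionals
  have key : ∀ k m : ℕ, ∃ (g : X →L[ℝ] ℝ) (y : X),
      y ∈ U k ∧ g y = 2 ∧ ∀ u ∈ U (k+1), |g u| ≤ 1/(m+1) := fun k m =>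
    aux_sep (mem_of_mem_nhds (hUnhds (k+1))) (hU (k+1)).1.2.1 (hU (k+1)).1.2.2.1
      (hU (k+1)).1.2.2.2 (hU k).2.2.2 m
  choose g yy hyyU hg2 hgle using key
  set d : ℕ → ℕ := fun n => Nat.findGreatest (fun k => n ∈ A k) n with hd
  set φ : ℕ → X →L[ℝ] ℝ :=
    fun n => if h : ∃ k, k ≤ n ∧ n ∈ A k then g (d n) n else 0 with hφ
  -- pointwise F-boundedness
  have hpb : ∀ x : X, ∃ C : ℝ, 0 < C ∧ {n | |φ n x| ≤ C} ∈ F := by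
    intro x
    refine ⟨1, one_pos, ?_⟩
    set Bx : Set ℕ := {n | 1 < |φ n x|} with hBx
    have hlevel : ∀ j : ℕ, (Bx ∩ {n | d n = j}).Finite := by
      intro j
      -- x is absorbed by U (j+1)
      have habsb := ((absorbent_nhds_zero (𝕜 := ℝ) (hUnhds (j+1))) x)
      rw [absorbs_iff_norm] at habsb
      obtain ⟨r, hr⟩ := habsb
      set c : ℝ := max r 1 with hc
      have hc1 : (1:ℝ) ≤ c := le_max_right r 1
      have hxc : x ∈ c • U (j+1) := by
        have := hr c (by rw [Real.norm_of_nonneg (by linarith)]; exact le_max_left r 1)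
        exact this rfl
      obtain ⟨u, hu, hxu⟩ := hxc
      refine Set.Finite.subset (Set.finite_Iio ⌈c⌉₊) ?_
      rintro n ⟨hnB, hnj⟩
      have hne : φ n ≠ 0 := by
        intro h0
        rw [hBx] at hnB
        simp only [Set.mem_setOf_eq, h0] at hnB
        simp only [ContinuousLinearMap.zero_apply, abs_zero] at hnB
        exact absurd hnB (by norm_num)
      have hcond : ∃ k, k ≤ n ∧ n ∈ A k := by
        by_contra hcon
        exact hne (by rw [hφ]; exact dif_neg hcon)
      have hφn : φ n = g j n := by
        rw [hφ]; simp only [dif_pos hcond]; rw [hnj]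
      have hb : |φ n x| ≤ c * (1/(n+1)) := by
        rw [hφn, ← hxu, map_smul, smul_eq_mul, abs_mul,
          abs_of_pos (by linarith : (0:ℝ) < c)]
        exact mul_le_mul_of_nonneg_left (hgle j n u hu) (by linarith)
      have h1 : 1 < c * (1/(n+1)) := lt_of_lt_of_le hnB hb
      have hn1 : ((n:ℝ)+1) < c := by
        have hpos : (0:ℝ) < (n:ℝ)+1 := by positivity
        rw [mul_one_div, lt_div_iff₀ hpos, one_mul] at h1
        exact h1
      have : (n:ℝ) < c := by linarith
      exact Set.mem_Iio.2 (Nat.lt_ceil.2 this)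
    have hfin : ∀ k, (Bx \ A k).Finite := by
      intro k
      have hsub : Bx \ A k ⊆ ⋃ j ∈ Finset.range k, (Bx ∩ {n | d n = j}) := by
        rintro n ⟨hnB, hnA⟩
        have hne : φ n ≠ 0 := by
          intro h0
          rw [hBx] at hnB
          simp only [Set.mem_setOf_eq, h0] at hnB
          simp only [ContinuousLinearMap.zero_apply, abs_zero] at hnB
          exact absurd hnB (by norm_num)
        have hcond : ∃ k', k' ≤ n ∧ n ∈ A k' := by
          by_contra hcon
          exact hne (by rw [hφ]; exact dif_neg hcon)
        obtain ⟨k', hk'n, hk'A⟩ := hcond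
        have hdA : n ∈ A (d n) := by
          simp only [hd]
          exact Nat.findGreatest_spec (P := fun k => n ∈ A k) hk'n hk'A
        have hdk : d n < k := by
          by_contra hcon
          push_neg at hcon
          exact hnA (hanti hcon hdA)
        exact Set.mem_biUnion (Finset.mem_range.2 hdk) ⟨hnB, rfl⟩
      exact Set.Finite.subset (Set.Finite.biUnion (Finset.range k).finite_toSet
        (fun j _ => hlevel j)) hsub
    have hnstat : ¬ FStat F Bx := fun hst => (hbad Bx hst).elim fun k hk => hk (hfin k)
    rw [FStat, not_not] at hnstat
    refine Filter.mem_of_superset hnstat ?_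
    intro n hn
    simpa [Bx, not_lt] using hn
  -- apply the hypothesis and derive a contradiction
  obtain ⟨U', hU', A', hA', hb⟩ := hubp φ hpb
  obtain ⟨j, -, hjsub⟩ := hV.1.mem_iff.1 hU'
  set K : ℕ := j + 1 with hK
  have hUK : U K ⊆ U' := fun x hx => hjsub ((hU j).2.2.1 hx)
  have hKmem : {n : ℕ | K ≤ n} ∈ F := by
    apply hfree
    rw [Filter.mem_cofinite]
    have : {n : ℕ | K ≤ n}ᶜ = Set.Iio K := by
      ext n; simp [Set.mem_Iio, not_le]
    rw [this]; exact Set.finite_Iio K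
  have hmeet : ∃ n, n ∈ A' ∧ K ≤ n ∧ n ∈ A K := by
    by_contra hcon
    push_neg at hcon
    apply hstat K
    refine Filter.mem_of_superset (Filter.inter_mem hA' hKmem) ?_
    rintro n ⟨hn1, hn2⟩
    exact hcon n hn1 hn2
  obtain ⟨n, hnA', hKn, hnAK⟩ := hmeet
  have hcond : ∃ k, k ≤ n ∧ n ∈ A k := ⟨K, hKn, hnAK⟩
  have hφn : φ n = g (d n) n := by rw [hφ]; exact dif_pos hcond
  have hdK : K ≤ d n := by
    simp only [hd]
    exact Nat.le_findGreatest (P := fun k => n ∈ A k) hKn hnAK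
  have hymem : yy (d n) n ∈ U' := hUK (hUanti hdK (hyyU (d n) n))
  have := hb (yy (d n) n) hymem n hnA'
  rw [hφn, hg2] at this
  norm_num at this
end

section
/- Let X be a normed space, F a free filter on ℕ, I an F-stationary subset of ℕ, ε > 0, and (I_n) an increasing interval-partition of I with respect to which F is slow. If the dual X' contains a sequence (φ_n)_{n∈I} that is ε-almost-euclidean on (I_n), then X' contains a pointwise F-bounded sequence (ψ_n) which is not bounded in norm on any infinite subset of I. -/
set_option maxHeartbeats 1000000 in
theorem stmt_14 (F : Filter ℕ) (hfree : F ≤ Filter.cofinite) [F.NeBot]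
    {X : Type*} [NormedAddCommGroup X] [NormedSpace ℝ X]
    (I : Set ℕ) (hI : FStat F I) (ε : ℝ) (hε : 0 < ε)
    (J : ℕ → Set ℕ) (hJ : IncIntervalPartition I J)
    (hJfin : ∀ n, (J n).Finite)
    (hslow : SlowWrt F I J)
    (φ : ℕ → X →L[ℝ] ℝ)
    (heucl : ∀ n : ℕ, ∀ a : ℕ → ℝ,
      (∑ j ∈ (hJfin n).toFinset, (a j) ^ 2) ≤
          ‖∑ j ∈ (hJfin n).toFinset, a j • φ j‖ ^ 2 ∧
        ‖∑ j ∈ (hJfin n).toFinset, a j • φ j‖ ^ 2 ≤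
          (1 + ε) * ∑ j ∈ (hJfin n).toFinset, (a j) ^ 2) :
    ∃ ψ : ℕ → X →L[ℝ] ℝ,
      (∀ x : X, ∃ r : ℝ, {n | |ψ n x| ≤ r} ∈ F) ∧
      ∀ S ⊆ I, S.Infinite → ¬ ∃ C : ℝ, ∀ n ∈ S, ‖ψ n‖ ≤ C := by
  classical
  obtain ⟨hne, hIco, hunion, hmono⟩ := hJ
  have hmem : ∀ j ∈ I, ∃ n, j ∈ J n := by
    intro j hj
    rw [← hunion] at hj
    simpa using hj
  set b : ℕ → ℕ := fun j => if h : j ∈ I then (hmem j h).choose else 0 with hb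
  have hbmem : ∀ j ∈ I, j ∈ J (b j) := by
    intro j hj
    simp only [hb, dif_pos hj]
    exact (hmem j hj).choose_spec
  have huniq : ∀ {j n m : ℕ}, j ∈ J n → j ∈ J m → n = m := by
    intro j n m hn hm
    rcases lt_trichotomy n m with h | h | h
    · exact absurd (hmono n m h j hn j hm) (lt_irrefl j)
    · exact h
    · exact absurd (hmono m n h j hm j hn) (lt_irrefl j)
  set ψ : ℕ → X →L[ℝ] ℝ :=
    fun j => if j ∈ I then Real.sqrt (b j) • φ j else 0 with hψ
  -- every φ j with j ∈ J n has norm at least 1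
  have hφ1 : ∀ n, ∀ j ∈ J n, (1:ℝ) ≤ ‖φ j‖ := by
    intro n j hj
    have hj' : j ∈ (hJfin n).toFinset := (hJfin n).mem_toFinset.mpr hj
    have h := (heucl n (fun k => if k = j then 1 else 0)).1
    have h1 : (∑ k ∈ (hJfin n).toFinset,
        ((fun k => if k = j then (1:ℝ) else 0) k) ^ 2) = 1 := by
      rw [Finset.sum_eq_single j]
      · simp
      · intro k _ hk; simp [hk]
      · intro hk; exact absurd hj' hk
    have h2 : (∑ k ∈ (hJfin n).toFinset,
        (fun k => if k = j then (1:ℝ) else 0) k • φ k) = φ j := by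
      rw [Finset.sum_eq_single j]
      · simp
      · intro k _ hk; simp [hk]
      · intro hk; exact absurd hj' hk
    rw [h1, h2] at h
    nlinarith [norm_nonneg (φ j)]
  -- key estimate: sum of squares of evaluations is bounded
  have hsum : ∀ n, ∀ x : X,
      (∑ j ∈ (hJfin n).toFinset, (φ j x) ^ 2) ≤ (1 + ε) * ‖x‖ ^ 2 := by
    intro n x
    set a : ℕ → ℝ := fun j => φ j x with ha
    set S : ℝ := ∑ j ∈ (hJfin n).toFinset, (a j) ^ 2 with hS
    have hS0 : 0 ≤ S := Finset.sum_nonneg fun j _ => sq_nonneg _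
    obtain ⟨h1, h2⟩ := heucl n a
    set T : X →L[ℝ] ℝ := ∑ j ∈ (hJfin n).toFinset, a j • φ j with hT
    have hTx : T x = S := by
      simp only [hT, hS, ContinuousLinearMap.sum_apply, ContinuousLinearMap.smul_apply,
        smul_eq_mul, ha, sq]
    have hle : S ≤ ‖T‖ * ‖x‖ := by
      calc S = T x := hTx.symm
        _ ≤ |T x| := le_abs_self _
        _ = ‖T x‖ := rfl
        _ ≤ ‖T‖ * ‖x‖ := T.le_opNorm x
    rcases hS0.eq_or_lt with hSz | hSpos
    · rw [← hSz]
      positivity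
    · have hsq : S * S ≤ ((1 + ε) * ‖x‖ ^ 2) * S := by
        have ha1 : S * S ≤ (‖T‖ * ‖x‖) * (‖T‖ * ‖x‖) :=
          mul_le_mul hle hle hS0 (mul_nonneg (norm_nonneg T) (norm_nonneg x))
        have ha2 : ‖T‖ ^ 2 * ‖x‖ ^ 2 ≤ ((1 + ε) * S) * ‖x‖ ^ 2 :=
          mul_le_mul_of_nonneg_right h2 (sq_nonneg _)
        nlinarith
      exact le_of_mul_le_mul_right (by linarith [hsq]) hSpos
  refine ⟨ψ, ?_, ?_⟩
  · -- pointwise F-bounded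
    intro x
    set r : ℝ := Real.sqrt (1 + ε) * ‖x‖ with hr
    have hr0 : 0 ≤ r := mul_nonneg (Real.sqrt_nonneg _) (norm_nonneg _)
    have hr2 : r ^ 2 = (1 + ε) * ‖x‖ ^ 2 := by
      rw [hr, mul_pow, Real.sq_sqrt (by linarith)]
    refine ⟨r, ?_⟩
    set A : Set ℕ := {j | r < |ψ j x|} with hA
    have hAsub : A ⊆ I := by
      intro j hj
      by_contra hjI
      have : ψ j = 0 := if_neg hjI
      simp [hA, this] at hj
      linarith [hj]
    by_cases hx : x = 0
    · have : {n | |ψ n x| ≤ r} = Set.univ := by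
        ext n; simp [hx, hr0]
      rw [this]
      exact Filter.univ_mem
    have hxn : 0 < ‖x‖ := norm_pos_iff.mpr hx
    have hrpos : 0 < r := mul_pos (Real.sqrt_pos.mpr (by linarith)) hxn
    -- count elements of A in each block
    have hcount : ∀ n, (A ∩ J n).ncard ≤ n := by
      intro n
      have hfin : (A ∩ J n).Finite := (hJfin n).subset Set.inter_subset_right
      rcases Nat.eq_zero_or_pos n with hn | hn
      · subst hn
        have hempty : A ∩ J 0 = ∅ := by
          ext j
          simp only [Set.mem_inter_iff, Set.mem_empty_iff_false, iff_false, not_and]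
          intro hjA hjJ
          have hjI : j ∈ I := hAsub hjA
          have hbj : b j = 0 := huniq (hbmem j hjI) hjJ
          have hψj : ψ j = 0 := by
            rw [hψ]
            simp [if_pos hjI, hbj]
          have := hjA
          simp only [hA, Set.mem_setOf_eq, hψj] at this
          simp at this
          linarith
        simp [hempty]
      have hn0 : 0 < (n : ℝ) := by exact_mod_cast hn
      rw [Set.ncard_eq_toFinset_card _ hfin]
      have hkey : ∀ j ∈ A ∩ J n, r ^ 2 / n ≤ (φ j x) ^ 2 := by
        rintro j ⟨hjA, hjJ⟩
        have hjI : j ∈ I := hAsub hjA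
        have hbj : b j = n := huniq (hbmem j hjI) hjJ
        have hψj : ψ j = Real.sqrt n • φ j := by
          rw [hψ]; simp only [if_pos hjI, hbj]
        have hval : r < Real.sqrt n * |φ j x| := by
          have := hjA
          simp only [hA, Set.mem_setOf_eq, hψj, ContinuousLinearMap.smul_apply,
            smul_eq_mul, abs_mul, abs_of_nonneg (Real.sqrt_nonneg _)] at this ⊢
          exact this
        have hsq : r ^ 2 < n * (φ j x) ^ 2 := by
          have h1 : r ^ 2 < (Real.sqrt n * |φ j x|) ^ 2 := by
            apply sq_lt_sq' _ hval
            have : 0 ≤ Real.sqrt n * |φ j x| :=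
              mul_nonneg (Real.sqrt_nonneg _) (abs_nonneg _)
            linarith
          calc r ^ 2 < (Real.sqrt n * |φ j x|) ^ 2 := h1
            _ = (n : ℝ) * (φ j x) ^ 2 := by
                rw [mul_pow, Real.sq_sqrt (le_of_lt hn0), sq_abs]
        rw [div_le_iff₀ hn0]
        nlinarith [hsq]
      have hss : hfin.toFinset ⊆ (hJfin n).toFinset := by
        intro j hj
        rw [Set.Finite.mem_toFinset] at hj ⊢
        exact hj.2
      have hsum1 : (hfin.toFinset.card : ℝ) * (r ^ 2 / n) ≤
          ∑ j ∈ hfin.toFinset, (φ j x) ^ 2 := by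
        have := Finset.card_nsmul_le_sum hfin.toFinset (fun j => (φ j x) ^ 2)
          (r ^ 2 / n) (fun j hj => hkey j (hfin.mem_toFinset.mp hj))
        simpa [nsmul_eq_mul] using this
      have hsum2 : ∑ j ∈ hfin.toFinset, (φ j x) ^ 2 ≤
          ∑ j ∈ (hJfin n).toFinset, (φ j x) ^ 2 :=
        Finset.sum_le_sum_of_subset_of_nonneg hss (fun j _ _ => sq_nonneg _)
      have hfinal : (hfin.toFinset.card : ℝ) * (r ^ 2 / n) ≤ r ^ 2 := by
        calc (hfin.toFinset.card : ℝ) * (r ^ 2 / n) ≤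
            ∑ j ∈ hfin.toFinset, (φ j x) ^ 2 := hsum1
          _ ≤ ∑ j ∈ (hJfin n).toFinset, (φ j x) ^ 2 := hsum2
          _ ≤ (1 + ε) * ‖x‖ ^ 2 := hsum n x
          _ = r ^ 2 := hr2.symm
      have hd : 0 < r ^ 2 / n := div_pos (by positivity) hn0
      have hcard : (hfin.toFinset.card : ℝ) ≤ n := by
        rw [← mul_le_mul_iff_of_pos_right hd]
        calc (hfin.toFinset.card : ℝ) * (r ^ 2 / n) ≤ r ^ 2 := hfinal
          _ = n * (r ^ 2 / n) := by field_simp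
      exact_mod_cast hcard
    -- use slowness
    have hnotstat : ¬ FStat F A := by
      intro hstat
      obtain ⟨n, hn⟩ := hslow A hAsub hstat
      exact absurd (hcount n) (not_le.mpr hn)
    have hAc : Aᶜ ∈ F := not_not.mp hnotstat
    have : {n | |ψ n x| ≤ r} = Aᶜ := by
      ext j
      simp [hA, not_lt]
    rw [this]
    exact hAc
  · -- unbounded on any infinite subset
    rintro S hSI hSinf ⟨C, hC⟩
    -- ‖ψ j‖ ≥ sqrt (b j) for j ∈ S
    have hlow : ∀ j ∈ S, Real.sqrt (b j) ≤ ‖ψ j‖ := by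
      intro j hj
      have hjI : j ∈ I := hSI hj
      have hψj : ψ j = Real.sqrt (b j) • φ j := if_pos hjI
      have hns : ‖Real.sqrt ((b j : ℕ) : ℝ) • φ j‖ =
          ‖Real.sqrt ((b j : ℕ) : ℝ)‖ * ‖φ j‖ :=
        norm_smul (α := ℝ) (β := X →L[ℝ] ℝ) _ _
      rw [hψj, hns, Real.norm_eq_abs, abs_of_nonneg (Real.sqrt_nonneg _)]
      nlinarith [hφ1 (b j) j (hbmem j hjI), Real.sqrt_nonneg (b j)]
    have hbbound : ∀ j ∈ S, (b j : ℝ) ≤ C ^ 2 := by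
      intro j hj
      have h1 : Real.sqrt (b j) ≤ C := le_trans (hlow j hj) (hC j hj)
      nlinarith [Real.sq_sqrt (Nat.cast_nonneg (b j) : (0:ℝ) ≤ (b j : ℝ)),
        Real.sqrt_nonneg (b j)]
    set N : ℕ := ⌈C ^ 2⌉₊ with hN
    have hbN : ∀ j ∈ S, b j ≤ N := by
      intro j hj
      have := hbbound j hj
      have h2 : (b j : ℝ) ≤ (N : ℝ) := le_trans this (Nat.le_ceil _)
      exact_mod_cast h2
    have hsub : S ⊆ ⋃ n ∈ Finset.range (N + 1), J n := by
      intro j hj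
      have hjI : j ∈ I := hSI hj
      exact Set.mem_biUnion (Finset.mem_range.mpr (Nat.lt_succ_of_le (hbN j hj)))
        (hbmem j hjI)
    have hfinU : (⋃ n ∈ Finset.range (N + 1), J n).Finite :=
      Set.Finite.biUnion (Finset.finite_toSet _) (fun n _ => hJfin n)
    exact hSinf (hfinU.subset hsub)
end

section
/- A free ultrafilter U on ℕ is semi-selective (i.e., both rapid⁺ and a P-point) if and only if for every sequence (A_k) of elements of U there exists a set {a₀ < a₁ < a₂ < ...} ∈ U with a_k ∈ A_k for every k. -/
/-- An ultrafilter `U` is a P-point: every decreasing sequence of elements of `U`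
has a pseudo-intersection in `U`. -/
def IsPPoint (U : Ultrafilter ℕ) : Prop :=
  ∀ A : ℕ → Set ℕ, (∀ k, A k ∈ U) → Antitone A →
    ∃ B ∈ U, ∀ k, (B \ A k).Finite

/-- An ultrafilter `U` is rapid⁺: for every strictly increasing `f` there is
`B ∈ U` whose enumerating function dominates `f`. -/
def IsRapid (U : Ultrafilter ℕ) : Prop :=
  ∀ f : ℕ → ℕ, StrictMono f → ∃ B ∈ U, ∀ n, f n ≤ Nat.nth (· ∈ B) n

open Classical in
/-- nth of a superset is at most nth of the subset. -/
lemma nth_le_nth_of_imp {p q : ℕ → Prop} (h : ∀ n, p n → q n)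
    (hp : (setOf p).Infinite) (n : ℕ) : Nat.nth q n ≤ Nat.nth p n := by
  set m := Nat.nth p n with hm
  have hpm : p m := Nat.nth_mem_of_infinite hp n
  have hcount : Nat.count p m = n := Nat.count_nth_of_infinite hp n
  have hle : n ≤ Nat.count q m := hcount ▸ Nat.count_mono_left (fun k _ => h k)
  rcases lt_or_eq_of_le hle with hlt | heq
  · exact (Nat.nth_lt_of_lt_count hlt).le
  · rw [heq, Nat.nth_count (h m hpm)]

open Classical in
/-- nth of the range of a strictly monotone function. -/
lemma nth_range_strictMono {a : ℕ → ℕ} (ha : StrictMono a) (n : ℕ) :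
    Nat.nth (· ∈ Set.range a) n = a n := by
  have hcount : Nat.count (· ∈ Set.range a) (a n) = n := by
    rw [Nat.count_eq_card_filter_range]
    have : Finset.filter (fun x => x ∈ Set.range a) (Finset.range (a n))
        = (Finset.range n).image a := by
      ext x
      simp only [Finset.mem_filter, Finset.mem_range, Set.mem_range, Finset.mem_image]
      constructor
      · rintro ⟨hlt, k, rfl⟩
        exact ⟨k, ha.lt_iff_lt.mp hlt, rfl⟩
      · rintro ⟨k, hk, rfl⟩
        exact ⟨ha hk, k, rfl⟩
    rw [this, Finset.card_image_of_injective _ ha.injective, Finset.card_range]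
  conv_lhs => rw [← hcount]
  exact Nat.nth_count ⟨n, rfl⟩

lemma mem_ultrafilter_infinite {U : Ultrafilter ℕ}
    (hfree : (U : Filter ℕ) ≤ Filter.cofinite) {B : Set ℕ} (hB : B ∈ U) : B.Infinite := by
  by_contra hinf
  rw [Set.not_infinite] at hinf
  have hfin := hinf
  have : Bᶜ ∈ U := hfree (by rwa [Filter.mem_cofinite, compl_compl])
  exact (Ultrafilter.compl_notMem_iff.2 hB) this

theorem stmt_15 (U : Ultrafilter ℕ) (hfree : (U : Filter ℕ) ≤ Filter.cofinite) :
    (IsRapid U ∧ IsPPoint U) ↔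
      ∀ A : ℕ → Set ℕ, (∀ k, A k ∈ U) →
        ∃ a : ℕ → ℕ, StrictMono a ∧ Set.range a ∈ U ∧ ∀ k, a k ∈ A k := by
  constructor
  · rintro ⟨hR, hP⟩ A hA
    -- decreasing intersections
    set A' : ℕ → Set ℕ := fun k => ⋂ j ∈ Set.Iic k, A j with hA'def
    have hA'mem : ∀ k, A' k ∈ U :=
      fun k => (Filter.biInter_mem (Set.finite_Iic k)).2 fun j _ => hA j
    have hA'anti : Antitone A' := by
      intro k l hkl x hx
      simp only [hA'def, Set.mem_iInter, Set.mem_Iic] at hx ⊢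
      exact fun j hj => hx j (hj.trans hkl)
    have hA'sub : ∀ k, A' k ⊆ A k := by
      intro k x hx
      simp only [hA'def, Set.mem_iInter, Set.mem_Iic] at hx
      exact hx k le_rfl
    obtain ⟨B, hBU, hBfin⟩ := hP A' hA'mem hA'anti
    -- bounds
    have hm : ∀ k, ∃ m, ∀ x ∈ B, m ≤ x → x ∈ A' k := by
      intro k
      obtain ⟨N, hN⟩ := (hBfin k).bddAbove
      refine ⟨N + 1, fun x hx hge => by_contra fun hc => ?_⟩
      have := hN (Set.mem_diff_of_mem hx hc)
      omega
    choose m hmspec using hm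
    set f : ℕ → ℕ := fun k => (Finset.range (k + 1)).sup m + k with hfdef
    have hfmono : StrictMono f := by
      apply strictMono_nat_of_lt_succ
      intro k
      have : (Finset.range (k + 1)).sup m ≤ (Finset.range (k + 1 + 1)).sup m :=
        Finset.sup_mono (Finset.range_subset_range.2 (by omega))
      simp only [hfdef]
      omega
    have hfge : ∀ k, m k ≤ f k := fun k =>
      le_trans (Finset.le_sup (Finset.self_mem_range_succ k)) (Nat.le_add_right _ _)
    obtain ⟨C, hCU, hCnth⟩ := hR f hfmono
    set D : Set ℕ := C ∩ B with hDdef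
    have hDU : D ∈ U := Filter.inter_mem hCU hBU
    have hDinf : D.Infinite := mem_ultrafilter_infinite hfree hDU
    have hrange : Set.range (Nat.nth (· ∈ D)) = D := Nat.range_nth_of_infinite hDinf
    refine ⟨Nat.nth (· ∈ D), Nat.nth_strictMono hDinf, ?_, ?_⟩
    · rwa [hrange]
    · intro k
      have hmem : Nat.nth (· ∈ D) k ∈ D := Nat.nth_mem_of_infinite hDinf k
      have h1 : f k ≤ Nat.nth (· ∈ D) k :=
        le_trans (hCnth k) (nth_le_nth_of_imp (fun n hn => hn.1) hDinf k)
      exact hA'sub k (hmspec k _ hmem.2 (le_trans (hfge k) h1))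
  · intro h
    constructor
    · intro f hf
      obtain ⟨a, hamono, haU, hak⟩ := h (fun k => {n | f k ≤ n}) (fun k => by
        apply hfree
        rw [Filter.mem_cofinite]
        have : {n | f k ≤ n}ᶜ ⊆ Set.Iio (f k) := by
          intro x hx
          simpa using hx
        exact (Set.finite_Iio _).subset this)
      refine ⟨Set.range a, haU, fun n => ?_⟩
      rw [nth_range_strictMono hamono]
      exact hak n
    · intro A hA hanti
      obtain ⟨a, hamono, haU, hak⟩ := h A hA
      refine ⟨Set.range a, haU, fun k => ?_⟩
      apply Set.Finite.subset ((Set.finite_Iio k).image a)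
      rintro x ⟨⟨j, rfl⟩, hxA⟩
      refine ⟨j, ?_, rfl⟩
      by_contra hj
      exact hxA (hanti (le_of_not_gt hj) (hak j))
end

section
/- Let ℕ = ⊔_i E_i be a partition of ℕ into finite sets with limsup_i |E_i| = ∞, and let G = {A ⊆ ℕ : limsup_i |E_i ∖ A| < ∞}. Then G is a free filter on ℕ, a set A is G-stationary if and only if limsup_i |E_i ∩ A| = ∞, G is a rapid⁺ P⁺-filter, and G is not countably generated. -/
/-- The filter `G` associated to a partition `(E i)` of ℕ into finite sets:
`A ∈ G` iff `limsup_i |E_i \ A| < ∞`, i.e. the cardinalities are bounded. -/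
def repickyFilter (E : ℕ → Set ℕ) : Set (Set ℕ) :=
  {A : Set ℕ | ∃ C : ℕ, ∀ i, (E i \ A).ncard ≤ C}

lemma count_eq_ncard' (p : ℕ → Prop) [DecidablePred p] (m : ℕ) :
    Nat.count p m = (setOf p ∩ Set.Iio m).ncard := by
  rw [Nat.count_eq_card_filter_range, ← Set.ncard_coe_finset]
  congr 1; ext x; simp [and_comm]; exact and_comm

lemma ncard_Iio_nat (m : ℕ) : (Set.Iio m).ncard = m := by
  rw [show Set.Iio m = ↑(Finset.range m) by ext; simp, Set.ncard_coe_finset,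
    Finset.card_range]

lemma statChar (E : ℕ → Set ℕ) (A : Set ℕ) :
    GStat (repickyFilter E) A ↔ ∀ C : ℕ, ∃ i, C < (E i ∩ A).ncard := by
  unfold GStat repickyFilter
  simp only [Set.mem_setOf_eq, not_exists, not_forall, not_le, Set.diff_compl]

/-- A stationary set is infinite. -/
lemma statInfinite (E : ℕ → Set ℕ) (A : Set ℕ)
    (h : ∀ C : ℕ, ∃ i, C < (E i ∩ A).ncard) : A.Infinite := by
  by_contra h'
  rw [Set.not_infinite] at h'
  rename' h' => hA
  obtain ⟨i, hi⟩ := h A.ncard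
  exact absurd (Set.ncard_le_ncard Set.inter_subset_right hA) (not_le.mpr hi)

/-- From a stationary set one can extract, inside a single `E i`, a finite subset of
any prescribed size all of whose elements are at least `m`. -/
lemma extract (E : ℕ → Set ℕ) (hfin : ∀ i, (E i).Finite) (I : Set ℕ)
    (hI : ∀ C : ℕ, ∃ i, C < (E i ∩ I).ncard) (m k : ℕ) :
    ∃ (b : Finset ℕ) (i : ℕ), ↑b ⊆ E i ∩ I ∧ b.card = k ∧ ∀ x ∈ b, m ≤ x := by
  obtain ⟨i, hi⟩ := hI (m + k)
  have hfin' : (E i ∩ I).Finite := (hfin i).inter_of_left _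
  have h1 : k ≤ ((E i ∩ I) \ Set.Iio m).ncard := by
    have := Set.le_ncard_diff (Set.Iio m) (E i ∩ I) (Set.finite_Iio m)
    rw [ncard_Iio_nat] at this
    omega
  obtain ⟨t, ht, htc⟩ := Set.exists_subset_card_eq h1
  have htfin : t.Finite := hfin'.diff.subset ht
  refine ⟨htfin.toFinset, i, ?_, ?_, ?_⟩
  · rw [Set.Finite.coe_toFinset]
    exact fun x hx => (ht hx).1
  · rw [← htc]
    exact (Set.ncard_eq_toFinset_card t htfin).symm
  · intro x hx
    rw [Set.Finite.mem_toFinset] at hx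
    exact not_lt.mp (ht hx).2

theorem stmt_16 (E : ℕ → Set ℕ)
    (hfin : ∀ i, (E i).Finite)
    (hdisj : Pairwise (Function.onFun Disjoint E))
    (hcover : (⋃ i, E i) = Set.univ)
    (hlimsup : ∀ C : ℕ, ∃ i, C < (E i).ncard) :
    -- G is a filter on ℕ:
    ((∀ A B : Set ℕ, A ∈ repickyFilter E → A ⊆ B → B ∈ repickyFilter E) ∧
     (∀ A B : Set ℕ, A ∈ repickyFilter E → B ∈ repickyFilter E →
        A ∩ B ∈ repickyFilter E) ∧
     Set.univ ∈ repickyFilter E ∧ (∅ : Set ℕ) ∉ repickyFilter E) ∧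
    -- G is free:
    (∀ A : Set ℕ, (Aᶜ).Finite → A ∈ repickyFilter E) ∧
    -- characterisation of stationary sets:
    (∀ A : Set ℕ, GStat (repickyFilter E) A ↔ ∀ C : ℕ, ∃ i, C < (E i ∩ A).ncard) ∧
    -- G is a rapid⁺ P⁺-filter:
    GRapidPlus (repickyFilter E) ∧ GPPlus (repickyFilter E) ∧
    -- G is not countably generated:
    ¬ ∃ S : ℕ → Set ℕ, (∀ n, S n ∈ repickyFilter E) ∧
        ∀ A ∈ repickyFilter E, ∃ n, S n ⊆ A := by
  refine ⟨⟨?_, ?_, ?_, ?_⟩, ?_, statChar E, ?_, ?_, ?_⟩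
  · -- upward closed
    rintro A B ⟨C, hC⟩ hAB
    exact ⟨C, fun i => le_trans
      (Set.ncard_le_ncard (Set.diff_subset_diff_right hAB) (hfin i).diff) (hC i)⟩
  · -- intersections
    rintro A B ⟨C, hC⟩ ⟨D, hD⟩
    refine ⟨C + D, fun i => ?_⟩
    calc (E i \ (A ∩ B)).ncard = ((E i \ A) ∪ (E i \ B)).ncard := by
          rw [Set.diff_inter]
      _ ≤ (E i \ A).ncard + (E i \ B).ncard := Set.ncard_union_le _ _
      _ ≤ C + D := add_le_add (hC i) (hD i)
  · -- univ
    exact ⟨0, fun i => by simp⟩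
  · -- empty not in
    rintro ⟨C, hC⟩
    obtain ⟨i, hi⟩ := hlimsup C
    simp only [Set.diff_empty] at hC
    exact absurd (hC i) (not_le.mpr hi)
  · -- free
    intro A hA
    refine ⟨hA.toFinset.card, fun i => ?_⟩
    rw [← Set.ncard_eq_toFinset_card _ hA]
    exact Set.ncard_le_ncard (fun x hx => hx.2) hA
  · -- rapid⁺
    intro I hIstat f hf
    rw [statChar] at hIstat
    set t : ℕ → ℕ := fun k => ∑ j ∈ Finset.range (k + 1), (j + 1) with ht
    have htmono : Monotone t := fun a b hab =>
      Finset.sum_le_sum_of_subset (Finset.range_subset_range.mpr (by omega))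
    have htlb : ∀ k, k + 1 ≤ t k := fun k =>
      Finset.single_le_sum (f := fun j => j + 1) (fun _ _ => Nat.zero_le _)
        (Finset.self_mem_range_succ k)
    choose b i hb hbcard hbge using fun k =>
      extract E hfin I hIstat (f (t k)) (k + 1)
    set B : Set ℕ := ⋃ k, (b k : Set ℕ) with hB
    have hBI : B ⊆ I := by
      rintro x hx
      obtain ⟨k, hk⟩ := Set.mem_iUnion.mp hx
      exact (hb k hk).2
    have hBstat : ∀ C : ℕ, ∃ j, C < (E j ∩ B).ncard := by
      intro C
      have hsub : (b C : Set ℕ) ⊆ E (i C) ∩ B :=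
        fun x hx => ⟨(hb C hx).1, Set.mem_iUnion.mpr ⟨C, hx⟩⟩
      refine ⟨i C, lt_of_lt_of_le ?_ (Set.ncard_le_ncard hsub ((hfin _).inter_of_left _))⟩
      rw [Set.ncard_coe_finset, hbcard C]; omega
    have hBinf : B.Infinite := statInfinite E B hBstat
    refine ⟨B, hBI, (statChar E B).mpr hBstat, fun n => ?_⟩
    classical
    have hset : setOf (· ∈ B) = B := rfl
    rw [← Nat.count_le_iff_le_nth (by exact hBinf)]
    rw [count_eq_ncard', hset]
    -- count elements of B below f n
    set F : Finset ℕ := (Finset.range n).filter (fun k => t k < n) with hF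
    have hsub : B ∩ Set.Iio (f n) ⊆ ↑(F.biUnion b) := by
      rintro x ⟨hxB, hxlt⟩
      obtain ⟨k, hk⟩ := Set.mem_iUnion.mp hxB
      have h1 : f (t k) ≤ x := hbge k x hk
      have h2 : t k < n := hf.lt_iff_lt.mp (lt_of_le_of_lt h1 hxlt)
      have h3 : k < n := by have := htlb k; omega
      exact Finset.mem_coe.mpr (Finset.mem_biUnion.mpr
        ⟨k, Finset.mem_filter.mpr ⟨Finset.mem_range.mpr h3, h2⟩, hk⟩)
    calc (B ∩ Set.Iio (f n)).ncard ≤ ((F.biUnion b : Finset ℕ) : Set ℕ).ncard :=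
          Set.ncard_le_ncard hsub ((F.biUnion b).finite_toSet)
      _ = (F.biUnion b).card := Set.ncard_coe_finset _
      _ ≤ ∑ k ∈ F, (b k).card := Finset.card_biUnion_le
      _ ≤ n := by
          rcases F.eq_empty_or_nonempty with hFe | hFne
          · simp [hFe]
          · set M := F.max' hFne with hM
            have hMF : M ∈ F := F.max'_mem hFne
            have hMn : t M < n := (Finset.mem_filter.mp hMF).2
            calc ∑ k ∈ F, (b k).card = ∑ k ∈ F, (k + 1) := by
                  exact Finset.sum_congr rfl (fun k _ => hbcard k)
              _ ≤ ∑ k ∈ Finset.range (M + 1), (k + 1) :=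
                  Finset.sum_le_sum_of_subset (fun k hk =>
                    Finset.mem_range.mpr (Nat.lt_succ_of_le (F.le_max' k hk)))
              _ = t M := rfl
              _ ≤ n := le_of_lt hMn
  · -- P⁺
    intro A hAstat hAanti
    have hchar : ∀ k, ∀ C : ℕ, ∃ i, C < (E i ∩ A k).ncard :=
      fun k => (statChar E (A k)).mp (hAstat k)
    choose b i hb hbcard _ using fun k => extract E hfin (A k) (hchar k) 0 (k + 1)
    set B : Set ℕ := ⋃ k, (b k : Set ℕ) with hB
    have hBstat : ∀ C : ℕ, ∃ j, C < (E j ∩ B).ncard := by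
      intro C
      have hsub : (b C : Set ℕ) ⊆ E (i C) ∩ B :=
        fun x hx => ⟨(hb C hx).1, Set.mem_iUnion.mpr ⟨C, hx⟩⟩
      refine ⟨i C, lt_of_lt_of_le ?_ (Set.ncard_le_ncard hsub ((hfin _).inter_of_left _))⟩
      rw [Set.ncard_coe_finset, hbcard C]; omega
    refine ⟨B, (statChar E B).mpr hBstat, fun k => ?_⟩
    refine Set.Finite.subset ((Finset.range k).biUnion b).finite_toSet ?_
    rintro x ⟨hxB, hxA⟩
    obtain ⟨j, hj⟩ := Set.mem_iUnion.mp hxB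
    have hjk : j < k := by
      by_contra h
      exact hxA (hAanti (not_lt.mp h) (hb j hj).2)
    exact Finset.mem_coe.mpr (Finset.mem_biUnion.mpr ⟨j, Finset.mem_range.mpr hjk, hj⟩)
  · -- not countably generated
    rintro ⟨S, hS, hgen⟩
    choose C hC using hS
    -- recursively pick indices with big E's
    set g : ℕ → ℕ × ℕ := fun n => Nat.rec
      (⟨(hlimsup (C 0)).choose, (E (hlimsup (C 0)).choose).ncard⟩)
      (fun n p =>
        ⟨(hlimsup (max (C (n + 1)) p.2)).choose,
          max p.2 (E (hlimsup (max (C (n + 1)) p.2)).choose).ncard⟩) n with hg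
    set idx : ℕ → ℕ := fun n => (g n).1 with hidx
    have hle : ∀ n, (E (idx n)).ncard ≤ (g n).2 := by
      intro n
      cases n with
      | zero => exact le_refl _
      | succ n => exact le_max_right _ _
    have hCn : ∀ n, C n < (E (idx n)).ncard := by
      intro n
      cases n with
      | zero => exact (hlimsup (C 0)).choose_spec
      | succ n =>
        exact lt_of_le_of_lt (le_max_left _ _) (hlimsup (max (C (n + 1)) (g n).2)).choose_spec
    have hstep : ∀ n, (g n).2 < (E (idx (n + 1))).ncard := by
      intro n
      exact lt_of_le_of_lt (le_max_right _ _) (hlimsup (max (C (n + 1)) (g n).2)).choose_spec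
    have hmono : StrictMono (fun n => (E (idx n)).ncard) :=
      strictMono_nat_of_lt_succ (fun n => lt_of_le_of_lt (hle n) (hstep n))
    have hinj : Function.Injective idx := by
      intro a b hab
      by_contra hne
      rcases Nat.lt_or_ge a b with h | h
      · exact absurd (hmono h) (by simp [hab])
      · exact absurd (hmono (lt_of_le_of_ne h (Ne.symm hne))) (by simp [hab])
    -- pick a point of E (idx n) ∩ S n
    have hnonempty : ∀ n, (E (idx n) ∩ S n).Nonempty := by
      intro n
      rw [Set.nonempty_iff_ne_empty]
      intro h
      have : E (idx n) \ S n = E (idx n) := by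
        ext x
        refine ⟨fun hx => hx.1, fun hx => ⟨hx, fun hxS => ?_⟩⟩
        exact Set.eq_empty_iff_forall_notMem.mp h x ⟨hx, hxS⟩
      have h2 := hC n (idx n)
      rw [this] at h2
      exact absurd (hCn n) (not_lt.mpr h2)
    choose x hx using hnonempty
    set A : Set ℕ := (Set.range x)ᶜ with hA
    have hxE : ∀ n, x n ∈ E (idx n) := fun n => (hx n).1
    have hAG : A ∈ repickyFilter E := by
      refine ⟨1, fun j => ?_⟩
      rw [Set.diff_compl]
      rw [Set.ncard_le_one_iff ((hfin j).inter_of_left _)]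
      rintro p q ⟨hpE, m, rfl⟩ ⟨hqE, m', rfl⟩
      have hm : idx m = j := by
        by_contra h
        exact Set.disjoint_left.mp (hdisj h) (hxE m) hpE
      have hm' : idx m' = j := by
        by_contra h
        exact Set.disjoint_left.mp (hdisj h) (hxE m') hqE
      rw [hinj (hm.trans hm'.symm)]
    obtain ⟨n, hn⟩ := hgen A hAG
    exact hn (hx n).2 ⟨n, rfl⟩
end

section
/- Let X and Y be locally convex topological vector spaces, π : X → Y a surjective continuous open linear map (quotient map), and F a filter on ℕ. If every pointwise F-bounded sequence of continuous linear maps from X to any locally convex space Z is F-equicontinuous, then the same holds for Y: every pointwise F-bounded sequence of continuous linear maps from Y to any locally convex space Z is F-equicontinuous. -/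
universe u v w

theorem stmt_17 (F : Filter ℕ)
    {X : Type v} {Y : Type w}
    [AddCommGroup X] [Module ℝ X] [TopologicalSpace X]
    [IsTopologicalAddGroup X] [ContinuousSMul ℝ X] [LocallyConvexSpace ℝ X]
    [AddCommGroup Y] [Module ℝ Y] [TopologicalSpace Y]
    [IsTopologicalAddGroup Y] [ContinuousSMul ℝ Y] [LocallyConvexSpace ℝ Y]
    (π : X →L[ℝ] Y) (hsurj : Function.Surjective π) (hopen : IsOpenMap π)
    (hX : ∀ (Z : Type u) [AddCommGroup Z] [Module ℝ Z] [TopologicalSpace Z]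
        [IsTopologicalAddGroup Z] [ContinuousSMul ℝ Z] [LocallyConvexSpace ℝ Z],
      ∀ T : ℕ → X →L[ℝ] Z,
        (∀ x : X, ∀ V ∈ nhds (0 : Z), ∃ t : ℝ, 0 < t ∧ {i | t • T i x ∈ V} ∈ F) →
        ∀ V ∈ nhds (0 : Z), ∃ U ∈ nhds (0 : X), {i | ∀ x ∈ U, T i x ∈ V} ∈ F) :
    ∀ (Z : Type u) [AddCommGroup Z] [Module ℝ Z] [TopologicalSpace Z]
        [IsTopologicalAddGroup Z] [ContinuousSMul ℝ Z] [LocallyConvexSpace ℝ Z],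
      ∀ T : ℕ → Y →L[ℝ] Z,
        (∀ y : Y, ∀ V ∈ nhds (0 : Z), ∃ t : ℝ, 0 < t ∧ {i | t • T i y ∈ V} ∈ F) →
        ∀ V ∈ nhds (0 : Z), ∃ U ∈ nhds (0 : Y), {i | ∀ y ∈ U, T i y ∈ V} ∈ F := by
  intro Z _ _ _ _ _ _ T hb V hV
  obtain ⟨U, hU, hUF⟩ := hX Z (fun i => (T i).comp π)
    (fun x V hV => hb (π x) V hV) V hV
  obtain ⟨O, hOU, hOopen, hO0⟩ := mem_nhds_iff.mp hU
  refine ⟨π '' O, (hopen O hOopen).mem_nhds ⟨0, hO0, map_zero π⟩, ?_⟩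
  filter_upwards [hUF] with i hi y hy
  obtain ⟨x, hx, rfl⟩ := hy
  exact hi x (hOU hx)
end

section
/- Let F be a free filter on ℕ that is a Baire filter, meaning: for every complete metric space X and every order-reversing map f from (F, ⊆) to the nowhere dense subsets of X ordered by ⊆, the union ⋃_{A∈F} f(A) is not all of X. Then for every Fréchet space X, every topological vector space Y, and every pointwise F-bounded sequence (T_i) of continuous linear maps from X to Y, the sequence (T_i) is F-equicontinuous. -/
universe u v w

open Uniformity Topology Set Filter Pointwise

theorem stmt_18 (F : Filter ℕ) (hfree : F ≤ Filter.cofinite) [F.NeBot]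
    (hBaire : ∀ (M : Type u) [MetricSpace M] [CompleteSpace M],
      ∀ g : Set ℕ → Set M,
        (∀ A ∈ F, IsNowhereDense (g A)) →
        (∀ A ∈ F, ∀ B ∈ F, A ⊆ B → g B ⊆ g A) →
        (⋃ A ∈ F, g A) ≠ Set.univ)
    {X : Type u} {Y : Type w}
    [AddCommGroup X] [Module ℝ X] [UniformSpace X] [IsUniformAddGroup X]
    [ContinuousSMul ℝ X] [LocallyConvexSpace ℝ X] [CompleteSpace X]
    [TopologicalSpace.MetrizableSpace X]
    [AddCommGroup Y] [Module ℝ Y] [TopologicalSpace Y]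
    [IsTopologicalAddGroup Y] [ContinuousSMul ℝ Y]
    (T : ℕ → X →L[ℝ] Y)
    (hpb : ∀ x : X, ∀ V ∈ nhds (0 : Y), ∃ t : ℝ, 0 < t ∧ {i | t • T i x ∈ V} ∈ F) :
    ∀ V ∈ nhds (0 : Y), ∃ U ∈ nhds (0 : X), {i | ∀ x ∈ U, T i x ∈ V} ∈ F := by
  intro V hV
  -- get a closed balanced W which is a 0-neighbourhood with W + W ⊆ V
  obtain ⟨V₂, hV₂mem, hV₂⟩ := exists_nhds_zero_half hV
  obtain ⟨V₁, hV₁mem, hV₁closed, hV₁sub⟩ := exists_mem_nhds_isClosed_subset hV₂mem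
  obtain ⟨B, ⟨hBmem, hBbal⟩, hBsub⟩ := (nhds_basis_balanced ℝ Y).mem_iff.mp hV₁mem
  set W : Set Y := closure B with hWdef
  have hWmem : W ∈ nhds (0 : Y) := Filter.mem_of_superset hBmem subset_closure
  have hWclosed : IsClosed W := isClosed_closure
  have hWbal : Balanced ℝ W := hBbal.closure
  have hWsub : W ⊆ V₂ := (closure_minimal hBsub hV₁closed).trans hV₁sub
  -- the sets E A n
  set E : Set ℕ → ℕ → Set X := fun A n => {x | ∀ i ∈ A, T i x ∈ ((n : ℝ) + 1) • W} with hE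
  have hsmul_mono : ∀ m n : ℕ, m ≤ n → ((m : ℝ) + 1) • W ⊆ ((n : ℝ) + 1) • W := by
    intro m n hmn y hy
    obtain ⟨w, hw, rfl⟩ := hy
    have hn1 : (0 : ℝ) < (n : ℝ) + 1 := by positivity
    have hm1 : (0 : ℝ) < (m : ℝ) + 1 := by positivity
    refine ⟨(((m : ℝ) + 1) / ((n : ℝ) + 1)) • w, hWbal.smul_mem ?_ hw, ?_⟩
    · rw [Real.norm_eq_abs, abs_div, abs_of_pos hm1, abs_of_pos hn1, div_le_one hn1]
      have : (m : ℝ) ≤ (n : ℝ) := Nat.cast_le.mpr hmn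
      linarith
    · show ((n : ℝ) + 1) • ((((m : ℝ) + 1) / ((n : ℝ) + 1)) • w) = ((m : ℝ) + 1) • w
      rw [smul_smul, mul_div_cancel₀ _ (ne_of_gt hn1)]
  have hEmono : ∀ (A : Set ℕ) (m n : ℕ), m ≤ n → E A m ⊆ E A n :=
    fun A m n hmn x hx i hi => hsmul_mono m n hmn (hx i hi)
  have hEanti : ∀ (A B : Set ℕ) (n : ℕ), A ⊆ B → E B n ⊆ E A n :=
    fun A B n hAB x hx i hi => hx i (hAB hi)
  have hEclosed : ∀ (A : Set ℕ) (n : ℕ), IsClosed (E A n) := by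
    intro A n
    have hrw : E A n = ⋂ i ∈ A, (T i) ⁻¹' (((n : ℝ) + 1) • W) := by
      ext x; simp [hE]
    rw [hrw]
    refine isClosed_biInter fun i _ => ((hWclosed.smul_of_ne_zero ?_).preimage (T i).continuous)
    positivity
  -- coverage
  have hcover : ∀ x : X, ∃ A ∈ F, x ∈ E A (sInf A) := by
    intro x
    obtain ⟨t, ht, hA⟩ := hpb x W hWmem
    obtain ⟨n, hn⟩ := exists_nat_ge (1 / t)
    set A : Set ℕ := {i | t • T i x ∈ W} ∩ {i | n ≤ i} with hAdef
    have hAF : A ∈ F := by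
      refine Filter.inter_mem hA (hfree ?_)
      rw [Filter.mem_cofinite]
      have hsub : {i : ℕ | n ≤ i}ᶜ ⊆ (Finset.range n : Set ℕ) := by
        intro i hi
        simp only [mem_compl_iff, mem_setOf_eq, not_le] at hi
        simpa using hi
      exact (Finset.range n).finite_toSet.subset hsub
    have hAne : A.Nonempty := Filter.nonempty_of_mem hAF
    have hnInf : n ≤ sInf A := (Nat.sInf_mem hAne).2
    refine ⟨A, hAF, fun i hi => ?_⟩
    set m : ℕ := sInf A with hm
    have hm1 : (0 : ℝ) < (m : ℝ) + 1 := by positivity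
    have key : (1 : ℝ) ≤ ((m : ℝ) + 1) * t := by
      have h1 : (1 : ℝ) ≤ (n : ℝ) * t := by
        rw [div_le_iff₀ ht] at hn; linarith
      have h2 : (n : ℝ) ≤ (m : ℝ) + 1 := by
        have : (n:ℝ) ≤ (m:ℝ) := Nat.cast_le.mpr hnInf; linarith
      nlinarith
    refine ⟨(((m : ℝ) + 1) * t)⁻¹ • (t • T i x), hWbal.smul_mem ?_ hi.1, ?_⟩
    · rw [Real.norm_eq_abs, abs_inv, abs_of_pos (by nlinarith)]
      rw [inv_le_one_iff₀]; right; exact key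
    · show ((m : ℝ) + 1) • ((((m : ℝ) + 1) * t)⁻¹ • (t • T i x)) = T i x
      rw [smul_smul, smul_smul]
      have hco : ((m : ℝ) + 1) * (((m : ℝ) + 1) * t)⁻¹ * t = 1 := by
        field_simp
      rw [hco, one_smul]
  -- set up the complete metric space structure on X
  haveI : Filter.IsCountablyGenerated (𝓤 X) := by
    rw [uniformity_eq_comap_nhds_zero]; infer_instance
  haveI : T0Space X := inferInstance
  letI M : MetricSpace X := UniformSpace.metricSpace X
  haveI hc : @CompleteSpace X M.toUniformSpace := ‹CompleteSpace X›
  -- apply the Baire hypothesis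
  set g : Set ℕ → Set X := fun A => E A (sInf A) with hg
  have hganti : ∀ A ∈ F, ∀ B ∈ F, A ⊆ B → g B ⊆ g A := by
    intro A hA B hB hAB
    have hAne : A.Nonempty := Filter.nonempty_of_mem hA
    have hle : sInf B ≤ sInf A := Nat.sInf_le (hAB (Nat.sInf_mem hAne))
    exact (hEanti A B (sInf B) hAB).trans (hEmono A (sInf B) (sInf A) hle)
  have hgunion : (⋃ A ∈ F, g A) = Set.univ := by
    ext x
    simp only [mem_iUnion, mem_univ, iff_true]
    obtain ⟨A, hAF, hx⟩ := hcover x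
    exact ⟨A, hAF, hx⟩
  have hnotall : ¬ (∀ A ∈ F, IsNowhereDense (g A)) :=
    fun h => hBaire X g h hganti hgunion
  push_neg at hnotall
  obtain ⟨A, hAF, hAnd⟩ := hnotall
  have hgclosed : IsClosed (g A) := hEclosed A (sInf A)
  have hint : (interior (g A)).Nonempty := by
    rw [Set.nonempty_iff_ne_empty]
    intro h
    apply hAnd
    show interior (closure (g A)) = ∅
    rwa [hgclosed.closure_eq]
  obtain ⟨x₀, hx₀⟩ := hint
  set m : ℕ := sInf A with hm
  have hm1 : (0 : ℝ) < (m : ℝ) + 1 := by positivity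
  -- U := preimage of the interior under x ↦ x₀ + (m+1) • x
  set U : Set X := (fun x : X => x₀ + ((m : ℝ) + 1) • x) ⁻¹' interior (g A) with hU
  have hUmem : U ∈ nhds (0 : X) := by
    have hcont : Continuous fun x : X => x₀ + ((m : ℝ) + 1) • x :=
      continuous_const.add (continuous_const.smul continuous_id)
    have h0 : interior (g A) ∈ nhds ((fun x : X => x₀ + ((m : ℝ) + 1) • x) 0) := by
      simpa using isOpen_interior.mem_nhds hx₀
    exact (hcont.continuousAt (x := (0 : X))).preimage_mem_nhds h0
  refine ⟨U, hUmem, Filter.mem_of_superset hAF fun i hi => ?_⟩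
  intro x hx
  have h1 : T i (x₀ + ((m : ℝ) + 1) • x) ∈ ((m : ℝ) + 1) • W := (interior_subset hx) i hi
  have h2 : T i x₀ ∈ ((m : ℝ) + 1) • W := (interior_subset hx₀) i hi
  have h3 : ((m : ℝ) + 1) • T i x = T i (x₀ + ((m : ℝ) + 1) • x) - T i x₀ := by
    rw [map_add, map_smul]; abel
  obtain ⟨w₁, hw₁, he₁⟩ := h1
  obtain ⟨w₂, hw₂, he₂⟩ := h2
  have h4 : ((m : ℝ) + 1) • T i x = ((m : ℝ) + 1) • (w₁ - w₂) := by
    rw [h3, ← he₁, ← he₂, smul_sub]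
  have h5 : T i x = w₁ - w₂ := by
    have h6 := congrArg (fun y : Y => (((m : ℝ) + 1)⁻¹) • y) h4
    simpa [smul_smul, inv_mul_cancel₀ (ne_of_gt hm1)] using h6
  rw [h5]
  have hw₂' : -w₂ ∈ W := by
    have := hWbal.smul_mem (a := (-1 : ℝ)) (by norm_num) hw₂
    simpa using this
  have : w₁ + -w₂ ∈ V := hV₂ w₁ (hWsub hw₁) (-w₂) (hWsub hw₂')
  simpa [sub_eq_add_neg] using this
end

section
/- Let F be a free filter on ℕ which is a P⁺-filter, let (X_i)_{i∈ℕ} be a sequence of Fréchet spaces, and let X = Π_i X_i with the product topology. Then the uniform F-boundedness principle holds for X (i.e., for every locally convex Y, every pointwise F-bounded sequence in L(X,Y) is F-equicontinuous) if and only if it holds for every X_i. -/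
universe u v

open Filter Set

/-- The uniform `F`-boundedness principle holds for the space `X`: for every
locally convex space `Y`, every pointwise `F`-bounded sequence of continuous
linear maps `X → Y` is `F`-equicontinuous. -/
def UBPFor (F : Filter ℕ) (X : Type v) [AddCommGroup X] [Module ℝ X]
    [TopologicalSpace X] : Prop :=
  ∀ (Y : Type u) [AddCommGroup Y] [Module ℝ Y] [TopologicalSpace Y]
      [IsTopologicalAddGroup Y] [ContinuousSMul ℝ Y] [LocallyConvexSpace ℝ Y],
    ∀ T : ℕ → X →L[ℝ] Y,
      (∀ x : X, ∀ V ∈ nhds (0 : Y), ∃ t : ℝ, 0 < t ∧ {j | t • T j x ∈ V} ∈ F) →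
      ∀ V ∈ nhds (0 : Y), ∃ U ∈ nhds (0 : X), {j | ∀ x ∈ U, T j x ∈ V} ∈ F

section Aux

variable {Xs : ℕ → Type v} [∀ i, AddCommGroup (Xs i)] [∀ i, Module ℝ (Xs i)]
  [∀ i, TopologicalSpace (Xs i)]

lemma box_subset_of_mem_nhds {U : Set (∀ i, Xs i)} (hU : U ∈ nhds 0) :
    ∃ I : Finset ℕ, ∃ O : ∀ i, Set (Xs i), (∀ i, O i ∈ nhds (0 : Xs i)) ∧
      {x : ∀ i, Xs i | ∀ i ∈ I, x i ∈ O i} ⊆ U := by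
  classical
  rw [nhds_pi, Filter.mem_pi] at hU
  obtain ⟨I, hIfin, t, ht, hsub⟩ := hU
  refine ⟨hIfin.toFinset, fun i => t i, fun i => ht i, ?_⟩
  intro x hx
  exact hsub fun i hi => hx i (hIfin.mem_toFinset.mpr hi)

lemma box_mem_nhds (I : Finset ℕ) (O : ∀ i, Set (Xs i)) (hO : ∀ i, O i ∈ nhds (0 : Xs i)) :
    {x : ∀ i, Xs i | ∀ i ∈ I, x i ∈ O i} ∈ nhds (0 : ∀ i, Xs i) := by
  have := set_pi_mem_nhds (Set.Finite.ofFinset I (fun i => Iff.rfl))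
    (fun i (_ : i ∈ (I : Set ℕ)) => hO i) (x := (0 : ∀ i, Xs i))
  convert this using 1
  ext x
  simp

variable [∀ i, IsTopologicalAddGroup (Xs i)]

/-- The canonical inclusion of a factor into the product, as a continuous linear map. -/
noncomputable def inclCLM (i : ℕ) : Xs i →L[ℝ] ∀ k, Xs k :=
  ⟨LinearMap.single ℝ Xs i, continuous_single i⟩

@[simp] lemma inclCLM_apply (i : ℕ) (u : Xs i) :
    inclCLM (Xs := Xs) i u = Pi.single i u := rfl

end Aux

lemma semi_sub_le {Y : Type u} [AddCommGroup Y] [Module ℝ Y] (p : Seminorm ℝ Y) (a b : Y) :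
    p a - p b ≤ p (a + b) := by
  have h1 : p a ≤ p (a + b) + p b := by
    calc p a = p ((a + b) + (-b)) := by rw [add_neg_cancel_right]
    _ ≤ p (a + b) + p (-b) := map_add_le_add p _ _
    _ = p (a + b) + p b := by rw [map_neg_eq_map]
  linarith

theorem stmt_19 (F : Filter ℕ) (hfree : F ≤ Filter.cofinite) [F.NeBot]
    (hP : PPlus F)
    (Xs : ℕ → Type v)
    [∀ i, AddCommGroup (Xs i)] [∀ i, Module ℝ (Xs i)]
    [∀ i, UniformSpace (Xs i)] [∀ i, IsUniformAddGroup (Xs i)]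
    [∀ i, ContinuousSMul ℝ (Xs i)] [∀ i, LocallyConvexSpace ℝ (Xs i)]
    [∀ i, CompleteSpace (Xs i)] [∀ i, TopologicalSpace.MetrizableSpace (Xs i)] :
    UBPFor.{u} F (∀ i, Xs i) ↔ ∀ i, UBPFor.{u} F (Xs i) := by
  classical
  constructor
  · -- easy direction: the product principle restricts to each factor
    intro hX i Y _ _ _ _ _ _ T hbdd V hV
    obtain ⟨U, hU, hA⟩ := hX Y (fun j => (T j).comp (ContinuousLinearMap.proj i))
      (fun x V' hV' => hbdd (x i) V' hV') V hV
    refine ⟨(inclCLM (Xs := Xs) i) ⁻¹' U, ?_, ?_⟩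
    · exact (inclCLM (Xs := Xs) i).continuous.continuousAt.preimage_mem_nhds
        (by rw [map_zero]; exact hU)
    · refine F.mem_of_superset hA ?_
      intro j hj u hu
      have := hj _ hu
      simpa using this
  · -- hard direction
    intro h Y _ _ _ _ _ _ T hbdd V hV
    obtain ⟨V₁, hV₁, hV₁V⟩ := exists_nhds_zero_half hV
    obtain ⟨W, ⟨hW0, hWopen, hWbal, hWconv⟩, hWV₁⟩ :=
      (nhds_hasBasis_absConvex_open ℝ Y).mem_iff.mp hV₁
    have hWabs : Absorbent ℝ W := absorbent_nhds_zero (hWopen.mem_nhds hW0)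
    set p : Seminorm ℝ Y := gaugeSeminorm hWbal hWconv hWabs with hpdef
    have pW_le : ∀ w ∈ W, p w ≤ 1 := fun w hw => gauge_le_one_of_mem hw
    have pW_ge : ∀ w, w ∉ W → 1 ≤ p w := fun w hw =>
      one_le_gauge_of_notMem (hWconv.starConvex hW0) (hWabs w) hw
    -- equicontinuity on finitely supported vectors
    have key : ∀ n : ℕ, ∀ V' ∈ nhds (0 : Y), ∃ U ∈ nhds (0 : ∀ i, Xs i),
        {j | ∀ x ∈ U, (∀ i, n ≤ i → x i = 0) → T j x ∈ V'} ∈ F := by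
      intro n
      induction n with
      | zero =>
        intro V' hV'
        refine ⟨Set.univ, Filter.univ_mem, ?_⟩
        refine F.mem_of_superset Filter.univ_mem ?_
        rintro j - x - hx0
        have hx : x = 0 := funext fun i => hx0 i (Nat.zero_le i)
        rw [hx, map_zero]
        exact mem_of_mem_nhds hV'
      | succ n ih =>
        intro V' hV'
        obtain ⟨V'', hV'', hadd⟩ := exists_nhds_zero_half hV'
        obtain ⟨U', hU', hA'⟩ := ih V'' hV''
        obtain ⟨I, O, hO, hbox⟩ := box_subset_of_mem_nhds hU'
        obtain ⟨Un, hUn, hAn⟩ := h n Y (fun j => (T j).comp (inclCLM n))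
          (fun z V₂ hV₂ => hbdd (inclCLM n z) V₂ hV₂) V'' hV''
        refine ⟨{x | ∀ i ∈ I, x i ∈ O i} ∩ {x | x n ∈ Un},
          Filter.inter_mem (box_mem_nhds I O hO)
            ((continuous_apply n).continuousAt.preimage_mem_nhds hUn), ?_⟩
        refine F.mem_of_superset (F.inter_mem hA' hAn) ?_
        rintro j ⟨hj1, hj2⟩ x ⟨hxbox, hxn⟩ hx0
        have hz : ∀ i, n ≤ i → (x - inclCLM n (x n)) i = 0 := by
          intro i hi
          rcases eq_or_lt_of_le hi with rfl | hlt
          · simp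
          · have hxi : x i = 0 := hx0 i hlt
            simp [Pi.single_eq_of_ne (Nat.ne_of_gt hlt), hxi]
        have hxbox' : (x - inclCLM n (x n)) ∈ U' := by
          apply hbox
          intro i hi
          by_cases hin : i = n
          · subst hin
            simpa using mem_of_mem_nhds (hO i)
          · have : (x - inclCLM n (x n)) i = x i := by
              simp [Pi.single_eq_of_ne hin]
            rw [this]; exact hxbox i hi
        have h1 : T j (x - inclCLM n (x n)) ∈ V'' := hj1 _ hxbox' hz
        have h2 : T j (inclCLM n (x n)) ∈ V'' := hj2 _ hxn
        have hsplit : x = (x - inclCLM n (x n)) + inclCLM n (x n) := by abel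
        rw [hsplit, map_add]
        exact hadd _ h1 _ h2
    set C : ℕ → Set ℕ :=
      fun n => {j | ∃ x : ∀ i, Xs i, (∀ i, i < n → x i = 0) ∧ T j x ∉ W} with hCdef
    by_cases hcase : ∃ n, (C n)ᶜ ∈ F
    · -- some tail is uniformly small F-often
      obtain ⟨n, hn⟩ := hcase
      obtain ⟨U₁, hU₁, hA₁⟩ := key n V₁ hV₁
      obtain ⟨I, O, hO, hbox⟩ := box_subset_of_mem_nhds hU₁
      refine ⟨{x | ∀ i ∈ I, x i ∈ O i}, box_mem_nhds I O hO, ?_⟩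
      refine F.mem_of_superset (F.inter_mem hn hA₁) ?_
      rintro j ⟨hjC, hjA⟩ x hx
      have hjC' : ∀ z : ∀ i, Xs i, (∀ i, i < n → z i = 0) → T j z ∈ W := by
        intro z hz
        by_contra hzW
        exact hjC ⟨z, hz, hzW⟩
      set xh : ∀ i, Xs i := fun i => if i < n then x i else 0 with hxh
      have hxh_box : xh ∈ U₁ := by
        apply hbox
        intro i hi
        by_cases hin : i < n
        · simpa [hxh, hin] using hx i hi
        · simpa [hxh, hin] using mem_of_mem_nhds (hO i)
      have hxh0 : ∀ i, n ≤ i → xh i = 0 := fun i hi => by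
        simp [hxh, Nat.not_lt.mpr hi]
      have h1 : T j xh ∈ V₁ := hjA xh hxh_box hxh0
      have h2 : T j (x - xh) ∈ V₁ := hWV₁ (hjC' _ (fun i hi => by simp [hxh, hi]))
      have hsplit : T j x = T j xh + T j (x - xh) := by
        rw [← map_add]; congr 1; abel
      rw [hsplit]
      exact hV₁V _ h1 _ h2
    · -- otherwise, each C n is F-stationary; use the P⁺ property to get a contradiction
      exfalso
      push_neg at hcase
      have hanti : Antitone C := by
        intro m n hmn j hj
        obtain ⟨x, hx, hTx⟩ := hj
        exact ⟨x, fun i hi => hx i (lt_of_lt_of_le hi hmn), hTx⟩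
      obtain ⟨B, hBstat, hBfin⟩ := hP C hcase hanti
      have hdex : ∀ j, ∃ n, j ∉ C n := by
        intro j
        have hWn : (T j) ⁻¹' W ∈ nhds (0 : ∀ i, Xs i) :=
          (T j).continuous.continuousAt.preimage_mem_nhds
            (by rw [map_zero]; exact hWopen.mem_nhds hW0)
        obtain ⟨I, O, hO, hbox⟩ := box_subset_of_mem_nhds hWn
        refine ⟨(I.sup id) + 1, ?_⟩
        rintro ⟨x, hx0, hTx⟩
        refine hTx (hbox ?_)
        intro i hi
        rw [hx0 i (Nat.lt_succ_of_le (Finset.le_sup (f := id) hi))]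
        exact mem_of_mem_nhds (hO i)
      set d : ℕ → ℕ := fun j => Nat.find (hdex j) with hddef
      have hd_spec : ∀ j, j ∉ C (d j) := fun j => Nat.find_spec (hdex j)
      have hd_min : ∀ j m, m < d j → j ∈ C m := fun j m hm =>
        not_not.mp (Nat.find_min (hdex j) hm)
      have hclassfin : ∀ n, {j | j ∈ B ∧ d j = n + 1}.Finite := by
        intro n
        apply (hBfin (n + 1)).subset
        rintro j ⟨hjB, hjd⟩
        exact ⟨hjB, by rw [← hjd]; exact hd_spec j⟩
      have hkill : ∀ j n, j ∉ C n → ∀ z : ∀ i, Xs i,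
          (∀ i, i < n → z i = 0) → p (T j z) = 0 := by
        intro j n hj z hz
        by_contra hne
        have hpos : 0 < p (T j z) := lt_of_le_of_ne (apply_nonneg p _) (Ne.symm hne)
        have hmem : T j ((2 / p (T j z)) • z) ∈ W := by
          by_contra hW'
          exact hj ⟨_, fun i hi => by rw [Pi.smul_apply, hz i hi, smul_zero], hW'⟩
        have h1 := pW_le _ hmem
        rw [map_smul, map_smul_eq_mul, Real.norm_eq_abs,
          abs_of_pos (by positivity), div_mul_cancel₀ _ (ne_of_gt hpos)] at h1
        linarith
      have lemA : ∀ (n : ℕ) (J : Finset ℕ), (∀ j ∈ J, j ∈ C n) →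
          ∀ (hv : ∀ i, Xs i) (M : ℝ),
          ∃ y : ∀ i, Xs i, (∀ i, i < n → y i = 0) ∧ ∀ j ∈ J, M ≤ p (T j (hv + y)) := by
        intro n J
        induction J using Finset.induction_on with
        | empty =>
          intro _ hv M
          exact ⟨0, fun i _ => rfl, fun j hj => absurd hj (Finset.notMem_empty j)⟩
        | @insert a J ha ih =>
          intro hJC hv M
          obtain ⟨y, hy0, hy⟩ := ih (fun j hj => hJC j (Finset.mem_insert_of_mem hj)) hv M
          obtain ⟨w, hw0, hTw⟩ := hJC a (Finset.mem_insert_self a J)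
          have hpw : 1 ≤ p (T a w) := pW_ge _ hTw
          set t : ℝ := 1 + max 0 ((insert a J).sup' ⟨a, Finset.mem_insert_self a J⟩
            (fun j => (M + p (T j (hv + y))) / p (T j w))) with htdef
          have ht0 : 0 ≤ t := by
            have := le_max_left (0 : ℝ) ((insert a J).sup' ⟨a, Finset.mem_insert_self a J⟩
              (fun j => (M + p (T j (hv + y))) / p (T j w)))
            rw [htdef]; linarith
          have htb : ∀ j ∈ insert a J, (M + p (T j (hv + y))) / p (T j w) ≤ t := by
            intro j hj
            calc (M + p (T j (hv + y))) / p (T j w)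
                ≤ (insert a J).sup' ⟨a, Finset.mem_insert_self a J⟩
                  (fun j => (M + p (T j (hv + y))) / p (T j w)) :=
                  Finset.le_sup' (fun j => (M + p (T j (hv + y))) / p (T j w)) hj
              _ ≤ max 0 _ := le_max_right _ _
              _ ≤ t := by rw [htdef]; linarith
          refine ⟨y + t • w, ?_, ?_⟩
          · intro i hi
            rw [Pi.add_apply, Pi.smul_apply, hy0 i hi, hw0 i hi, smul_zero, add_zero]
          · intro j hj
            have hsplit : T j (hv + (y + t • w)) = T j (hv + y) + t • T j w := by
              rw [show hv + (y + t • w) = (hv + y) + t • w by abel, map_add, map_smul]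
            rcases (apply_nonneg p (T j w)).eq_or_lt with hc | hc
            · have hjJ : j ∈ J := by
                rcases Finset.mem_insert.mp hj with rfl | hjJ
                · exfalso; rw [← hc] at hpw; linarith
                · exact hjJ
              have hM : M ≤ p (T j (hv + y)) := hy j hjJ
              have hsm : p (t • T j w) = 0 := by
                rw [map_smul_eq_mul, ← hc, mul_zero]
              have hsb := semi_sub_le p (T j (hv + y)) (t • T j w)
              rw [hsplit]
              rw [hsm] at hsb
              linarith
            · have hbound := htb j hj
              have h2 : M + p (T j (hv + y)) ≤ t * p (T j w) := by
                rwa [div_le_iff₀ hc] at hbound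
              have hsm : p (t • T j w) = t * p (T j w) := by
                rw [map_smul_eq_mul, Real.norm_eq_abs, abs_of_nonneg ht0]
              have hsb := semi_sub_le p (t • T j w) (T j (hv + y))
              rw [hsplit, add_comm]
              rw [hsm] at hsb
              linarith
      have glem : ∀ (n : ℕ) (hv : ∀ i, Xs i), ∃ y : ∀ i, Xs i,
          (∀ i, i < n → y i = 0) ∧
          ∀ j, j ∈ B → d j = n + 1 → ((n : ℝ) + 1) ≤ p (T j (hv + y)) := by
        intro n hv
        obtain ⟨y, h1, h2⟩ := lemA n (hclassfin n).toFinset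
          (fun j hj => by
            rw [Set.Finite.mem_toFinset] at hj
            exact hd_min j n (by rw [hj.2]; exact Nat.lt_succ_self n)) hv ((n : ℝ) + 1)
        refine ⟨y, h1, fun j hjB hjd => h2 j ?_⟩
        rw [Set.Finite.mem_toFinset]
        exact ⟨hjB, hjd⟩
      choose g hg1 hg2 using glem
      set H : ℕ → ∀ i, Xs i := fun n => Nat.rec 0 (fun m ih => ih + g m ih) n with hHdef
      have hH : ∀ n, H (n + 1) = H n + g n (H n) := fun n => rfl
      set x : ∀ i, Xs i := fun i => H (i + 1) i with hxdef
      have hstab : ∀ i m, i + 1 ≤ m → H m i = x i := by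
        intro i m hm
        induction m, hm using Nat.le_induction with
        | base => rfl
        | succ m hm ih =>
          rw [hH m, Pi.add_apply, hg1 m (H m) i (by omega), add_zero, ih]
      have hbig : ∀ j, j ∈ B → ∀ n, d j = n + 1 → ((n : ℝ) + 1) ≤ p (T j x) := by
        intro j hjB n hdj
        have h1 : ((n : ℝ) + 1) ≤ p (T j (H (n + 1))) := by
          have := hg2 n (H n) j hjB hdj
          rwa [← hH n] at this
        have h2 : p (T j (x - H (n + 1))) = 0 := by
          apply hkill j (n + 1) (by rw [← hdj]; exact hd_spec j)
          intro i hi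
          rw [Pi.sub_apply, hstab i (n + 1) hi, sub_self]
        have hsp := semi_sub_le p (T j (H (n + 1))) (T j (x - H (n + 1)))
        rw [← map_add, show H (n + 1) + (x - H (n + 1)) = x by abel] at hsp
        rw [h2] at hsp
        linarith
      have hbig' : ∀ j, j ∈ B → 1 ≤ d j → (d j : ℝ) ≤ p (T j x) := by
        intro j hjB h1
        obtain ⟨n, hn⟩ : ∃ n, d j = n + 1 := ⟨d j - 1, by omega⟩
        rw [hn]
        push_cast
        exact hbig j hjB n hn
      obtain ⟨t, ht, hS⟩ := hbdd x W (hWopen.mem_nhds hW0)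
      obtain ⟨N, hN⟩ := exists_nat_gt (1 / t)
      have hBCN : (B ∩ C N)ᶜ ∉ F := by
        intro hmem
        apply hBstat
        have hfinmem : (B \ C N)ᶜ ∈ F := hfree ((hBfin N).compl_mem_cofinite)
        refine F.mem_of_superset (F.inter_mem hmem hfinmem) ?_
        rintro j ⟨hj1, hj2⟩ hjB
        rcases Classical.em (j ∈ C N) with hjC | hjC
        · exact hj1 ⟨hjB, hjC⟩
        · exact hj2 ⟨hjB, hjC⟩
      have hne : ¬ ({j | t • T j x ∈ W} ⊆ (B ∩ C N)ᶜ) := fun hsub =>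
        hBCN (F.mem_of_superset hS hsub)
      obtain ⟨j, hjS, hjBC⟩ := Set.not_subset.mp hne
      rw [Set.notMem_compl_iff] at hjBC
      obtain ⟨hjB, hjC⟩ := hjBC
      have hdj : N < d j := by
        by_contra hle
        push_neg at hle
        exact hd_spec j (hanti hle hjC)
      have hsmall : t * p (T j x) ≤ 1 := by
        have := pW_le _ hjS
        rwa [map_smul_eq_mul, Real.norm_eq_abs, abs_of_pos ht] at this
      have hlt : p (T j x) ≤ 1 / t := by
        rw [le_div_iff₀ ht]
        linarith
      have hcast : (N : ℝ) < (d j : ℝ) := by exact_mod_cast hdj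
      have := hbig' j hjB (by omega)
      linarith
end
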